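/- arXiv:math/0609339 — 4 statements merged into one kernel-verified Lean document; each statement's English description precedes it below -/
import Mathlib

section
/- For every finite simple graph G with at least one vertex and n vertices, the number of connected components of G equals the minimum of ℓ(λ) (the number of parts of λ) over all partitions λ of n with c_λ(G) ≠ 0. -/
open SimpleGraph Finset

variable {V : Type*} {W : Type*}

open Classical in
/-- `edgeSetType A` : the "type" of the edge set `A`, i.e. the partition (as a multiset of
positive integers) of `#V` whose parts are the orders of the connected components of the
spanning subgraph `(V, A)`. -/
noncomputable def edgeSetType [Fintype V] (A : Finset (Sym2 V)) : Multiset ℕ :=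
  ((Finset.univ : Finset V).image
    (fun v => (SimpleGraph.fromEdgeSet (↑A : Set (Sym2 V))).connectedComponentMk v)).val.map
    (fun c => c.supp.ncard)

open Classical in
/-- `cCoeff G λ = Σ_{A ⊆ E(G), type(A) = λ} (−1)^{#A}`, the coefficient of the power-sum
symmetric function `p_λ` in the chromatic symmetric function `X_G`. -/
noncomputable def cCoeff [Fintype V] (G : SimpleGraph V) (lam : Multiset ℕ) : ℤ :=
  ∑ A ∈ (Finset.univ : Finset (Sym2 V)).powerset,
    if (↑A : Set (Sym2 V)) ⊆ G.edgeSet ∧ edgeSetType A = lam then (-1 : ℤ) ^ A.card else 0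

open Classical in
/-- `NCoeff G λ` : the number of edge sets `A ⊆ E(G)` with `type(A) = λ`. -/
noncomputable def NCoeff [Fintype V] (G : SimpleGraph V) (lam : Multiset ℕ) : ℕ :=
  ((Finset.univ : Finset (Sym2 V)).powerset.filter
    (fun (A : Finset (Sym2 V)) => (↑A : Set (Sym2 V)) ⊆ G.edgeSet ∧ edgeSetType A = lam)).card

attribute [local instance] Classical.propDecidable

noncomputable def gph (s : Finset (Sym2 V)) : SimpleGraph V :=
  SimpleGraph.fromEdgeSet (↑s : Set (Sym2 V))

lemma gph_mono {s t : Finset (Sym2 V)} (h : s ⊆ t) : gph s ≤ gph t :=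
  SimpleGraph.fromEdgeSet_mono (by exact_mod_cast h)

lemma gph_adj {s : Finset (Sym2 V)} {x y : V} :
    (gph s).Adj x y ↔ s(x, y) ∈ s ∧ x ≠ y := by
  simp [gph, SimpleGraph.fromEdgeSet_adj]

lemma gph_adj_insert {s : Finset (Sym2 V)} {a b : V} (hab : a ≠ b) :
    (gph (insert s(a,b) s)).Adj a b := by
  classical
  rw [gph_adj]
  exact ⟨Finset.mem_insert_self _ _, hab⟩

lemma reach_insert_cases {s : Finset (Sym2 V)} {a b x y : V}
    (h : (gph (insert s(a,b) s)).Reachable x y) :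
    (gph s).Reachable x y ∨
      ((gph s).Reachable x a ∧ (gph s).Reachable b y) ∨
      ((gph s).Reachable x b ∧ (gph s).Reachable a y) := by
  classical
  obtain ⟨w⟩ := h
  induction w with
  | nil => exact Or.inl (Reachable.refl _)
  | @cons u v z h p ih =>
    rw [gph_adj, Finset.mem_insert] at h
    obtain ⟨huv | huv, hne⟩ := h
    · -- s(u,v) = s(a,b)
      rw [Sym2.eq_iff] at huv
      rcases ih with hvy | ⟨hva, hby⟩ | ⟨hvb, hay⟩
      · rcases huv with ⟨rfl, rfl⟩ | ⟨rfl, rfl⟩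
        · exact Or.inr (Or.inl ⟨Reachable.refl _, hvy⟩)
        · exact Or.inr (Or.inr ⟨Reachable.refl _, hvy⟩)
      · rcases huv with ⟨rfl, rfl⟩ | ⟨rfl, rfl⟩
        · -- u = a, v = b, Reach b a, Reach b y
          exact Or.inl ((hva.symm.trans hby))
        · exact Or.inl hby
      · rcases huv with ⟨rfl, rfl⟩ | ⟨rfl, rfl⟩
        · exact Or.inl hay
        · exact Or.inr (Or.inr ⟨Reachable.refl _, hay⟩)
    · have huvr : (gph s).Reachable u v := SimpleGraph.Adj.reachable (gph_adj.2 ⟨huv, hne⟩)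
      rcases ih with hvy | ⟨hva, hby⟩ | ⟨hvb, hay⟩
      · exact Or.inl (huvr.trans hvy)
      · exact Or.inr (Or.inl ⟨huvr.trans hva, hby⟩)
      · exact Or.inr (Or.inr ⟨huvr.trans hvb, hay⟩)

noncomputable def ncc [Fintype V] (s : Finset (Sym2 V)) : ℕ :=
  Nat.card (gph s).ConnectedComponent

/-- map on connected components induced by a subset relation -/
noncomputable def ccMap {s t : Finset (Sym2 V)} (h : s ⊆ t) :
    (gph s).ConnectedComponent → (gph t).ConnectedComponent :=
  SimpleGraph.ConnectedComponent.map (SimpleGraph.Hom.ofLE (gph_mono h))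

lemma ccMap_mk {s t : Finset (Sym2 V)} (h : s ⊆ t) (v : V) :
    ccMap h ((gph s).connectedComponentMk v) = (gph t).connectedComponentMk v := rfl

lemma ccMap_surjective {s t : Finset (Sym2 V)} (h : s ⊆ t) :
    Function.Surjective (ccMap h) := by
  intro c
  obtain ⟨v, rfl⟩ := c.exists_rep
  exact ⟨(gph s).connectedComponentMk v, rfl⟩

lemma ncc_le_of_subset [Fintype V] {s t : Finset (Sym2 V)} (h : s ⊆ t) :
    ncc t ≤ ncc s :=
  Nat.card_le_card_of_surjective _ (ccMap_surjective h)

lemma ncc_insert_of_reachable [Fintype V] {s : Finset (Sym2 V)} {a b : V}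
    (hr : (gph s).Reachable a b) : ncc (insert s(a,b) s) = ncc s := by
  have hsub : s ⊆ insert s(a,b) s := Finset.subset_insert _ _
  have hinj : Function.Injective (ccMap hsub) := by
    intro c d hcd
    obtain ⟨x, rfl⟩ := c.exists_rep
    obtain ⟨y, rfl⟩ := d.exists_rep
    have hcd' : (gph (insert s(a,b) s)).Reachable x y :=
      SimpleGraph.ConnectedComponent.eq.mp hcd
    refine SimpleGraph.ConnectedComponent.eq.mpr ?_
    rcases reach_insert_cases hcd' with hxy | ⟨hxa, hby⟩ | ⟨hxb, hay⟩
    · exact hxy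
    · exact (hxa.trans hr).trans hby
    · exact (hxb.trans hr.symm).trans hay
  exact (Nat.card_eq_of_bijective _ ⟨hinj, ccMap_surjective hsub⟩).symm

lemma gph_insert_diag (s : Finset (Sym2 V)) (a : V) :
    gph (insert s(a,a) s) = gph s := by
  ext x y
  simp only [gph_adj, Finset.mem_insert]
  constructor
  · rintro ⟨h | h, hne⟩
    · rw [Sym2.eq_iff] at h
      rcases h with ⟨rfl, rfl⟩ | ⟨rfl, rfl⟩ <;> exact absurd rfl hne
    · exact ⟨h, hne⟩
  · rintro ⟨h, hne⟩; exact ⟨Or.inr h, hne⟩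

lemma ncc_insert_of_not_reachable [Fintype V] {s : Finset (Sym2 V)} {a b : V}
    (hab : a ≠ b) (hr : ¬ (gph s).Reachable a b) :
    ncc s = ncc (insert s(a,b) s) + 1 := by
  set G := gph s
  set cb := G.connectedComponentMk b with hcb
  have hsub : s ⊆ insert s(a,b) s := Finset.subset_insert _ _
  set f := ccMap hsub with hf
  -- restricted map is bijective
  have hbij : Function.Bijective (fun c : {c : G.ConnectedComponent // c ≠ cb} => f c.1) := by
    constructor
    · rintro ⟨c, hc⟩ ⟨d, hd⟩ hcd
      obtain ⟨x, rfl⟩ := c.exists_rep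
      obtain ⟨y, rfl⟩ := d.exists_rep
      have hcd' : (gph (insert s(a,b) s)).Reachable x y :=
        SimpleGraph.ConnectedComponent.eq.mp hcd
      refine Subtype.ext (SimpleGraph.ConnectedComponent.eq.mpr ?_)
      rcases reach_insert_cases hcd' with hxy | ⟨hxa, hby⟩ | ⟨hxb, hay⟩
      · exact hxy
      · exact absurd (SimpleGraph.ConnectedComponent.eq.2 hby.symm) hd
      · exact absurd (SimpleGraph.ConnectedComponent.eq.2 hxb) hc
    · intro c
      obtain ⟨x, rfl⟩ := c.exists_rep
      by_cases hx : G.Reachable x b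
      · refine ⟨⟨G.connectedComponentMk a, fun hEq => hr (SimpleGraph.ConnectedComponent.eq.mp hEq)⟩, ?_⟩
        exact SimpleGraph.ConnectedComponent.eq.mpr
          (((SimpleGraph.Adj.reachable (gph_adj_insert hab)).trans
            (hx.mono (gph_mono hsub)).symm).symm).symm
      · exact ⟨⟨G.connectedComponentMk x, fun hEq => hx (SimpleGraph.ConnectedComponent.eq.mp hEq)⟩, rfl⟩
  have h1 : ncc (insert s(a,b) s) = Nat.card {c : G.ConnectedComponent // c ≠ cb} :=
    (Nat.card_eq_of_bijective _ hbij).symm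
  have h2 : ncc s = Nat.card {c : G.ConnectedComponent // c ≠ cb} + 1 := by
    letI : Fintype G.ConnectedComponent := Fintype.ofFinite _
    rw [ncc, Nat.card_congr (Equiv.optionSubtypeNe cb).symm, Nat.card_eq_fintype_card,
      Fintype.card_option, Nat.card_eq_fintype_card]
  rw [h1, h2]

lemma reachable_of_eq {s : Finset (Sym2 V)} {a b : V} (h : a = b) :
    (gph s).Reachable a b := h ▸ Reachable.refl _

noncomputable def Ssum [Fintype V] (F E : Finset (Sym2 V)) : ℤ :=
  ∑ A ∈ E.powerset, if ncc (A ∪ F) = ncc (E ∪ F) then (-1:ℤ)^A.card else 0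

def Good (F : Finset (Sym2 V)) (e : Sym2 V) : Prop :=
  ∀ x y : V, e = s(x,y) → ¬ (gph F).Reachable x y

lemma ncc_le_insert_succ [Fintype V] (s : Finset (Sym2 V)) (a b : V) :
    ncc s ≤ ncc (insert s(a,b) s) + 1 := by
  by_cases h : (gph s).Reachable a b
  · rw [ncc_insert_of_reachable h]; omega
  · exact (ncc_insert_of_not_reachable (fun hEq => h (reachable_of_eq hEq)) h).le

lemma Ssum_step [Fintype V] (F E : Finset (Sym2 V)) {e : Sym2 V} (he : e ∈ E) :
    Ssum F E =
      (∑ A ∈ (E.erase e).powerset,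
        if ncc (A ∪ F) = ncc (E ∪ F) then (-1:ℤ)^A.card else 0)
      - Ssum (insert e F) (E.erase e) := by
  set E' := E.erase e with hE'
  have heE' : e ∉ E' := Finset.notMem_erase _ _
  have hE : E = insert e E' := (Finset.insert_erase he).symm
  have hEF : E ∪ F = E' ∪ insert e F := by
    rw [hE, Finset.insert_union, Finset.union_insert]
  have hpow : E.powerset = E'.powerset ∪ E'.powerset.image (insert e) := by
    rw [hE, Finset.powerset_insert]
  have hd : Disjoint E'.powerset (E'.powerset.image (insert e)) := by
    rw [Finset.disjoint_left]
    intro A hA hA'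
    obtain ⟨B, _, rfl⟩ := Finset.mem_image.mp hA'
    exact heE' (Finset.mem_powerset.mp hA (Finset.mem_insert_self _ _))
  rw [Ssum, hpow, Finset.sum_union hd]
  congr 1
  rw [Finset.sum_image (by
    intro A hA B hB hAB
    have hA' : e ∉ A := fun h => heE' (Finset.mem_powerset.mp hA h)
    have hB' : e ∉ B := fun h => heE' (Finset.mem_powerset.mp hB h)
    rw [← Finset.erase_insert hA', ← Finset.erase_insert hB', hAB])]
  rw [Ssum, ← Finset.sum_neg_distrib]
  apply Finset.sum_congr rfl
  intro B hB
  have hBe : e ∉ B := fun h => heE' (Finset.mem_powerset.mp hB h)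
  rw [Finset.card_insert_of_notMem hBe, Finset.insert_union, ← Finset.union_insert, ← hEF]
  split
  · rw [pow_succ]; ring
  · ring

lemma claimAB [Fintype V] :
    ∀ (n : ℕ) (E F : Finset (Sym2 V)), E.card = n →
      (0 ≤ (-1:ℤ)^(ncc F - ncc (E ∪ F)) * Ssum F E ∧
        ((∀ e ∈ E, Good F e) → 0 < (-1:ℤ)^(ncc F - ncc (E ∪ F)) * Ssum F E)) := by
  intro n
  induction n with
  | zero =>
    intro E F hcard
    have hE : E = ∅ := Finset.card_eq_zero.mp hcard
    subst hE
    have : Ssum F (∅ : Finset (Sym2 V)) = 1 := by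
      rw [Ssum]
      simp
    rw [this, Finset.empty_union, Nat.sub_self]
    norm_num
  | succ n ih =>
    intro E F hcard
    obtain ⟨e, he⟩ : ∃ e, e ∈ E := Finset.card_pos.mp (by omega) |>.exists_mem
    obtain ⟨a, b, rfl⟩ : ∃ a b, e = s(a, b) := by
      induction e using Sym2.ind with | _ x y => exact ⟨x, y, rfl⟩
    set E' := E.erase (s(a,b)) with hE'
    have hcard' : E'.card = n := by
      rw [hE', Finset.card_erase_of_mem he, hcard]
      omega
    have hsub1 : E' ⊆ E := Finset.erase_subset _ _
    have hEeq : E = insert s(a,b) E' := (Finset.insert_erase he).symm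
    have hEF : E ∪ F = E' ∪ insert s(a,b) F := by
      conv_lhs => rw [hEeq]
      rw [Finset.insert_union, Finset.union_insert]
    have hEeq2 : E ∪ F = insert s(a,b) (E' ∪ F) := by
      conv_lhs => rw [hEeq]
      rw [Finset.insert_union]
    have hstep := Ssum_step F E he
    rw [← hE'] at hstep
    by_cases h1 : (gph F).Reachable a b
    · -- loop case : Ssum F E = 0
      have hmono : gph F ≤ gph (E' ∪ F) := gph_mono Finset.subset_union_right
      have hzero : Ssum F E = 0 := by
        rw [hstep]
        have h2 : Ssum (insert s(a,b) F) E' =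
            ∑ A ∈ E'.powerset, if ncc (A ∪ F) = ncc (E ∪ F) then (-1:ℤ)^A.card else 0 := by
          rw [Ssum, ← hEF]
          apply Finset.sum_congr rfl
          intro A hA
          have hmA : gph F ≤ gph (A ∪ F) := gph_mono Finset.subset_union_right
          rw [Finset.union_insert, ncc_insert_of_reachable (h1.mono hmA)]
        rw [h2]; ring
      constructor
      · rw [hzero]; simp
      · intro hGood
        exact absurd h1 (hGood s(a,b) he a b rfl)
    · -- non-loop case
      have hab : a ≠ b := fun hEq => h1 (reachable_of_eq hEq)
      have hk : ncc F = ncc (insert s(a,b) F) + 1 := ncc_insert_of_not_reachable hab h1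
      have hins_sub : insert s(a,b) F ⊆ E ∪ F :=
        Finset.insert_subset (Finset.mem_union_left _ he) Finset.subset_union_right
      have hm : ncc (E ∪ F) ≤ ncc (insert s(a,b) F) := ncc_le_of_subset hins_sub
      have hm2 : ncc (E ∪ F) ≤ ncc (E' ∪ F) :=
        ncc_le_of_subset (Finset.union_subset_union_left hsub1)
      have hup : ncc (E' ∪ F) ≤ ncc (E ∪ F) + 1 := by
        rw [hEeq2]; exact ncc_le_insert_succ _ a b
      have hFm : ncc (E ∪ F) ≤ ncc F :=
        ncc_le_of_subset Finset.subset_union_right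
      have hpow : (-1:ℤ)^(ncc F - ncc (E ∪ F)) =
          -(-1:ℤ)^(ncc (insert s(a,b) F) - ncc (E ∪ F)) := by
        rw [show ncc F - ncc (E ∪ F) = (ncc (insert s(a,b) F) - ncc (E ∪ F)) + 1 by omega,
          pow_succ]
        ring
      have IH2 := ih E' (insert s(a,b) F) hcard'
      rw [← hEF] at IH2
      by_cases hbr : ncc (E' ∪ F) = ncc (E ∪ F)
      · -- non-bridge
        have hfirst : (∑ A ∈ E'.powerset,
            if ncc (A ∪ F) = ncc (E ∪ F) then (-1:ℤ)^A.card else 0) = Ssum F E' := by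
          rw [Ssum, hbr]
        rw [hfirst] at hstep
        have IH1 := ih E' F hcard'
        rw [hbr] at IH1
        have IH1a := IH1.1
        rw [hpow] at IH1a
        constructor
        · rw [hstep, hpow]
          linarith [IH1a, IH2.1]
        · intro hGood
          have hGood' : ∀ e ∈ E', Good F e := fun e heE' => hGood e (hsub1 heE')
          have IH1b := IH1.2 hGood'
          rw [hpow] at IH1b
          rw [hstep, hpow]
          linarith [IH1b, IH2.1]
      · -- bridge
        have hbrr : ncc (E' ∪ F) = ncc (E ∪ F) + 1 := by omega
        have hfirst : (∑ A ∈ E'.powerset,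
            if ncc (A ∪ F) = ncc (E ∪ F) then (-1:ℤ)^A.card else 0) = 0 := by
          apply Finset.sum_eq_zero
          intro A hA
          have hle : ncc (E' ∪ F) ≤ ncc (A ∪ F) :=
            ncc_le_of_subset (Finset.union_subset_union_left (Finset.mem_powerset.mp hA))
          rw [if_neg (by omega)]
        rw [hfirst] at hstep
        have hmono' : gph F ≤ gph (E' ∪ F) := gph_mono Finset.subset_union_right
        have hGoodStep : (∀ e ∈ E, Good F e) → ∀ f ∈ E', Good (insert s(a,b) F) f := by
          intro hGood f hf x y hfxy hreach
          rcases reach_insert_cases hreach with hxy | ⟨hxa, hby⟩ | ⟨hxb, hay⟩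
          · exact hGood f (hsub1 hf) x y hfxy hxy
          · by_cases hxy' : x = y
            · exact h1 (hby.trans ((reachable_of_eq hxy').symm.trans hxa)).symm
            · have hadj : (gph (E' ∪ F)).Adj x y :=
                gph_adj.2 ⟨Finset.mem_union_left _ (hfxy ▸ hf), hxy'⟩
              have hreach_ab : (gph (E' ∪ F)).Reachable a b :=
                (hxa.mono hmono').symm.trans (hadj.reachable.trans (hby.mono hmono').symm)
              have : ncc (E ∪ F) = ncc (E' ∪ F) := by
                rw [hEeq2, ncc_insert_of_reachable hreach_ab]
              omega
          · by_cases hxy' : x = y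
            · exact h1 (hay.trans ((reachable_of_eq hxy').symm.trans hxb))
            · have hadj : (gph (E' ∪ F)).Adj x y :=
                gph_adj.2 ⟨Finset.mem_union_left _ (hfxy ▸ hf), hxy'⟩
              have hreach_ab : (gph (E' ∪ F)).Reachable a b :=
                (hay.mono hmono').trans (hadj.reachable.symm.trans (hxb.mono hmono'))
              have : ncc (E ∪ F) = ncc (E' ∪ F) := by
                rw [hEeq2, ncc_insert_of_reachable hreach_ab]
              omega
        constructor
        · rw [hstep, hpow]
          linarith [IH2.1]
        · intro hGood
          rw [hstep, hpow]
          linarith [IH2.2 (hGoodStep hGood)]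

lemma connectedComponentMk_surj (G : SimpleGraph V) :
    Function.Surjective G.connectedComponentMk := fun c => c.exists_rep

lemma edgeSetType_eq [Fintype V] (A : Finset (Sym2 V)) :
    edgeSetType A = (Finset.univ : Finset (gph A).ConnectedComponent).val.map
      (fun c => c.supp.ncard) := by
  rw [edgeSetType]
  congr 1
  congr 1
  convert Finset.image_univ_of_surjective (connectedComponentMk_surj (gph A))
  rfl

lemma edgeSetType_card [Fintype V] (A : Finset (Sym2 V)) :
    (edgeSetType A).card = ncc A := by
  rw [edgeSetType_eq, Multiset.card_map, ncc, Nat.card_eq_fintype_card]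
  rfl

lemma supp_ncard_eq [Fintype V] {G : SimpleGraph V} (c : G.ConnectedComponent) :
    c.supp.ncard = #(Finset.univ.filter (fun v => G.connectedComponentMk v = c)) := by
  rw [Set.ncard_eq_toFinset_card']
  congr 1
  ext v
  simp [SimpleGraph.ConnectedComponent.mem_supp_iff]

lemma edgeSetType_sum [Fintype V] (A : Finset (Sym2 V)) :
    (edgeSetType A).sum = Fintype.card V := by
  rw [edgeSetType_eq]
  rw [show ((Finset.univ : Finset (gph A).ConnectedComponent).val.map
      (fun c => c.supp.ncard)).sum
    = ∑ c : (gph A).ConnectedComponent, c.supp.ncard from rfl]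
  rw [Fintype.card, Finset.card_eq_sum_card_fiberwise
    (f := (gph A).connectedComponentMk) (t := Finset.univ) (fun x _ => Finset.mem_univ _)]
  exact Finset.sum_congr rfl fun c _ => supp_ncard_eq c

lemma edgeSetType_pos [Fintype V] (A : Finset (Sym2 V)) :
    ∀ i ∈ edgeSetType A, 0 < i := by
  rw [edgeSetType_eq]
  intro i hi
  obtain ⟨c, _, rfl⟩ := Multiset.mem_map.mp hi
  obtain ⟨v, hv⟩ := c.exists_rep
  exact (Set.ncard_pos (Set.toFinite _)).mpr
    ⟨v, hv⟩

lemma edgeSetType_eq_of_ncc_eq [Fintype V] {A B : Finset (Sym2 V)} (h : A ⊆ B)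
    (hn : ncc A = ncc B) : edgeSetType A = edgeSetType B := by
  have hbij : Function.Bijective (ccMap h) :=
    (Nat.bijective_iff_surjective_and_card _).mpr ⟨ccMap_surjective h, hn⟩
  have hsupp : ∀ c : (gph A).ConnectedComponent, (ccMap h c).supp = c.supp := by
    intro c
    ext x
    rw [SimpleGraph.ConnectedComponent.mem_supp_iff, SimpleGraph.ConnectedComponent.mem_supp_iff]
    constructor
    · intro hx
      have h2 : ccMap h ((gph A).connectedComponentMk x) = ccMap h c := hx
      exact hbij.1 h2
    · rintro rfl
      rfl
  rw [edgeSetType_eq, edgeSetType_eq]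
  have huniv : (Finset.univ : Finset (gph B).ConnectedComponent)
      = Finset.univ.map (Equiv.ofBijective _ hbij).toEmbedding :=
    (Finset.map_univ_equiv _).symm
  rw [huniv, Finset.map_val, Multiset.map_map]
  apply Multiset.map_congr rfl
  intro c _
  simp only [Function.comp_apply, Equiv.toEmbedding_apply, Equiv.ofBijective_apply]
  rw [hsupp]

lemma cCoeff_eq [Fintype V] (G : SimpleGraph V) (lam : Multiset ℕ) :
    cCoeff G lam = ∑ A ∈ G.edgeSet.toFinset.powerset,
      if edgeSetType A = lam then (-1:ℤ)^A.card else 0 := by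
  rw [cCoeff, ← Finset.sum_subset
    (Finset.powerset_mono.mpr (Finset.subset_univ _) :
      G.edgeSet.toFinset.powerset ⊆ _)
    (fun A _ hA => by
      rw [if_neg]
      rintro ⟨hsub, -⟩
      apply hA
      rw [Finset.mem_powerset]
      intro x hx
      rw [Set.mem_toFinset]
      exact hsub hx)]
  apply Finset.sum_congr rfl
  intro A hA
  have h1 : (↑A : Set (Sym2 V)) ⊆ G.edgeSet := by
    intro x hx
    have := Finset.mem_powerset.mp hA hx
    rwa [Set.mem_toFinset] at this
  rw [if_congr (and_iff_right h1) rfl rfl]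

/-- For a finite simple graph `G` with at least one vertex, the number of connected components
of `G` equals the minimum number of parts `ℓ(λ)` over all partitions `λ` of `n = #V` with
`c_λ(G) ≠ 0`. -/
theorem stmt_1 [Fintype V] [Nonempty V] (G : SimpleGraph V) :
    Nat.card G.ConnectedComponent =
      sInf {k : ℕ | ∃ lam : Multiset ℕ, lam.sum = Fintype.card V ∧ (∀ i ∈ lam, 0 < i) ∧
        cCoeff G lam ≠ 0 ∧ lam.card = k} := by
  set E₀ := G.edgeSet.toFinset with hE₀
  have hgph : gph E₀ = G := by
    rw [gph, hE₀, Set.coe_toFinset, SimpleGraph.fromEdgeSet_edgeSet]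
  have hncc : Nat.card G.ConnectedComponent = ncc E₀ := by rw [ncc, hgph]
  set lam₀ := edgeSetType E₀ with hlam₀
  have hcond : ∀ A ∈ E₀.powerset, ((edgeSetType A = lam₀) ↔ (ncc (A ∪ ∅) = ncc (E₀ ∪ ∅))) := by
    intro A hA
    rw [Finset.union_empty, Finset.union_empty]
    constructor
    · intro h
      rw [← edgeSetType_card, h, hlam₀, edgeSetType_card]
    · exact fun h => edgeSetType_eq_of_ncc_eq (Finset.mem_powerset.mp hA) h
  have hC : cCoeff G lam₀ = Ssum ∅ E₀ := by
    rw [cCoeff_eq, Ssum]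
    exact Finset.sum_congr rfl fun A hA => if_congr (hcond A hA) rfl rfl
  have hGood : ∀ e ∈ E₀, Good ∅ e := by
    intro e he x y hxy hr
    have hbot : gph (∅ : Finset (Sym2 V)) = ⊥ := by
      rw [gph]
      simp
    rw [hbot, SimpleGraph.reachable_bot] at hr
    subst hr
    rw [hE₀, Set.mem_toFinset, hxy] at he
    exact G.irrefl ((SimpleGraph.mem_edgeSet G).mp he)
  have hpos := (claimAB E₀.card E₀ ∅ rfl).2 hGood
  have hne : cCoeff G lam₀ ≠ 0 := by
    rw [hC]
    intro h
    rw [h, mul_zero] at hpos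
    exact lt_irrefl 0 hpos
  have hmem : ncc E₀ ∈ {k : ℕ | ∃ lam : Multiset ℕ, lam.sum = Fintype.card V ∧
      (∀ i ∈ lam, 0 < i) ∧ cCoeff G lam ≠ 0 ∧ lam.card = k} :=
    ⟨lam₀, edgeSetType_sum _, edgeSetType_pos _, hne, edgeSetType_card _⟩
  rw [hncc]
  apply le_antisymm
  · apply le_csInf ⟨_, hmem⟩
    rintro k ⟨lam, hsum, hpos', hcne, rfl⟩
    by_contra hlt
    apply hcne
    rw [cCoeff_eq]
    apply Finset.sum_eq_zero
    intro A hA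
    rw [if_neg]
    intro hAl
    have h1 := edgeSetType_card A
    have hge : ncc E₀ ≤ ncc A := ncc_le_of_subset (Finset.mem_powerset.mp hA)
    rw [hAl] at h1
    omega
  · exact Nat.sInf_le hmem
end

section
/- Let G be a finite simple graph with n vertices and m edges that contains at least one cycle, and let g be the girth of G (the minimum length of a cycle in G). Then for k = n − g + 1, one has Σ_{λ ⊢ n, ℓ(λ)=k} c_λ(G) ≠ (−1)^{n−k} C(m, n−k), while for every integer k with n − g + 1 < k ≤ n one has Σ_{λ ⊢ n, ℓ(λ)=k} c_λ(G) = (−1)^{n−k} C(m, n−k). Consequently the girth of G equals n − k₀ + 1, where k₀ is the largest k for which the displayed inequality holds. -/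
open SimpleGraph Finset

variable {V : Type*} {W : Type*}

namespace StmtAux

variable {V : Type*}

lemma end_mem_tail {G : SimpleGraph V} :
    ∀ {u v : V} (p : G.Walk u v), p.length ≠ 0 → v ∈ p.support.tail
  | _, _, Walk.nil, h => absurd rfl h
  | _, _, Walk.cons _ q, _ => by
      rw [Walk.support_cons]
      exact Walk.end_mem_support q

lemma mem_tail_of_closed {G : SimpleGraph V} {a x : V} {p : G.Walk a a}
    (hp : p.length ≠ 0) (hx : x ∈ p.support) : x ∈ p.support.tail := by
  rw [Walk.support_eq_cons] at hx
  rcases List.mem_cons.mp hx with rfl | h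
  · exact end_mem_tail p hp
  · exact h

open Classical in
lemma cycle_support_card {G : SimpleGraph V} {a : V} {w : G.Walk a a} (hw : w.IsCycle) :
    w.support.toFinset.card = w.length := by
  have hlen : w.length ≠ 0 := by have := hw.three_le_length; omega
  have ha : a ∈ w.support.tail := end_mem_tail w hlen
  have h1 : w.support.toFinset = w.support.tail.toFinset := by
    conv_lhs => rw [Walk.support_eq_cons]
    rw [List.toFinset_cons, Finset.insert_eq_self.mpr (List.mem_toFinset.mpr ha)]
  rw [h1, List.toFinset_card_of_nodup hw.support_nodup, List.length_tail,
    Walk.length_support]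
  omega

lemma reach_sup_edge {G : SimpleGraph V} {u v x y : V}
    (h : (G ⊔ fromEdgeSet {s(u, v)}).Reachable x y) :
    G.Reachable x y ∨ (G.Reachable x u ∧ G.Reachable v y) ∨
      (G.Reachable x v ∧ G.Reachable u y) := by
  obtain ⟨w⟩ := h
  induction w with
  | nil => exact Or.inl (Reachable.refl _)
  | @cons a b c hadj p ih =>
    rw [sup_adj, fromEdgeSet_adj, Set.mem_singleton_iff, Sym2.eq_iff] at hadj
    rcases hadj with hadj | ⟨(⟨rfl, rfl⟩ | ⟨rfl, rfl⟩), hne⟩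
    · rcases ih with h1 | ⟨h1, h2⟩ | ⟨h1, h2⟩
      · exact Or.inl (hadj.reachable.trans h1)
      · exact Or.inr (Or.inl ⟨hadj.reachable.trans h1, h2⟩)
      · exact Or.inr (Or.inr ⟨hadj.reachable.trans h1, h2⟩)
    · rcases ih with h1 | ⟨h1, h2⟩ | ⟨h1, h2⟩
      · exact Or.inr (Or.inl ⟨Reachable.refl _, h1⟩)
      · exact Or.inl (h1.symm.trans h2)
      · exact Or.inl h2
    · rcases ih with h1 | ⟨h1, h2⟩ | ⟨h1, h2⟩
      · exact Or.inr (Or.inr ⟨Reachable.refl _, h1⟩)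
      · exact Or.inl h2
      · exact Or.inl (h1.symm.trans h2)

lemma card_cc_le [Fintype V] {G H : SimpleGraph V} (h : G ≤ H) :
    Nat.card H.ConnectedComponent ≤ Nat.card G.ConnectedComponent := by
  apply Nat.card_le_card_of_surjective
    (ConnectedComponent.map (SimpleGraph.Hom.ofLE h))
  intro c
  refine c.ind fun v => ⟨G.connectedComponentMk v, rfl⟩

lemma card_cc_sup_edge_reach [Fintype V] {G : SimpleGraph V} {u v : V}
    (h : G.Reachable u v) :
    Nat.card (G ⊔ fromEdgeSet {s(u, v)}).ConnectedComponent
      = Nat.card G.ConnectedComponent := by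
  refine (Nat.card_eq_of_bijective
    (ConnectedComponent.map (SimpleGraph.Hom.ofLE le_sup_left)) ⟨?_, ?_⟩).symm
  · refine ConnectedComponent.ind₂ fun x y hxy => ?_
    have hr : (G ⊔ fromEdgeSet {s(u, v)}).Reachable x y := ConnectedComponent.exact hxy
    refine ConnectedComponent.sound ?_
    rcases reach_sup_edge hr with h1 | ⟨h1, h2⟩ | ⟨h1, h2⟩
    · exact h1
    · exact (h1.trans h).trans h2
    · exact (h1.trans h.symm).trans h2
  · refine ConnectedComponent.ind fun x => ⟨G.connectedComponentMk x, rfl⟩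

lemma card_cc_sup_edge_not_reach [Fintype V] {G : SimpleGraph V} {u v : V} (huv : u ≠ v)
    (h : ¬ G.Reachable u v) :
    Nat.card (G ⊔ fromEdgeSet {s(u, v)}).ConnectedComponent + 1
      = Nat.card G.ConnectedComponent := by
  classical
  set G' := G ⊔ fromEdgeSet {s(u, v)} with hG'
  set f : G.ConnectedComponent → G'.ConnectedComponent :=
    ConnectedComponent.map (SimpleGraph.Hom.ofLE le_sup_left) with hf
  have hadj : G'.Adj u v := Or.inr (by rw [fromEdgeSet_adj]; exact ⟨rfl, huv⟩)
  have key : Function.Bijective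
      (fun c : {c : G.ConnectedComponent // c ≠ G.connectedComponentMk v} => f c.1) := by
    constructor
    · rintro ⟨c, hc⟩ ⟨d, hd⟩ hcd
      obtain ⟨x, rfl⟩ := c.exists_rep
      obtain ⟨y, rfl⟩ := d.exists_rep
      have hr : G'.Reachable x y := ConnectedComponent.exact hcd
      refine Subtype.ext (ConnectedComponent.sound ?_)
      rcases reach_sup_edge hr with h1 | ⟨h1, h2⟩ | ⟨h1, h2⟩
      · exact h1
      · exact absurd (ConnectedComponent.sound h2.symm) hd
      · exact absurd (ConnectedComponent.sound h1) hc
    · refine ConnectedComponent.ind fun x => ?_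
      by_cases hxv : G.Reachable x v
      · refine ⟨⟨G.connectedComponentMk u, fun heq => h (ConnectedComponent.exact heq)⟩, ?_⟩
        show G'.connectedComponentMk u = G'.connectedComponentMk x
        exact ConnectedComponent.sound (hadj.reachable.trans (hxv.mono le_sup_left).symm)
      · exact ⟨⟨G.connectedComponentMk x, fun heq => hxv (ConnectedComponent.exact heq)⟩, rfl⟩
  have h1 : Nat.card G'.ConnectedComponent
      = Nat.card {c : G.ConnectedComponent // c ≠ G.connectedComponentMk v} :=
    (Nat.card_eq_of_bijective _ key).symm
  have hfin : Finite G.ConnectedComponent := Quot.finite _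
  cases nonempty_fintype G.ConnectedComponent
  have h2 : Nat.card {c : G.ConnectedComponent // c ≠ G.connectedComponentMk v}
      = Nat.card G.ConnectedComponent - 1 := by
    rw [Nat.card_eq_fintype_card, Nat.card_eq_fintype_card]
    have := Fintype.card_subtype_compl (fun c : G.ConnectedComponent =>
      c = G.connectedComponentMk v)
    rw [Fintype.card_subtype_eq] at this
    exact this
  have h3 : 1 ≤ Nat.card G.ConnectedComponent := by
    have : Nonempty G.ConnectedComponent := ⟨G.connectedComponentMk v⟩
    exact Nat.one_le_iff_ne_zero.mpr (Nat.card_ne_zero.mpr ⟨this, hfin⟩)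
  omega

lemma card_cc_bot [Fintype V] :
    Nat.card (⊥ : SimpleGraph V).ConnectedComponent = Fintype.card V := by
  rw [← Nat.card_eq_fintype_card]
  refine (Nat.card_eq_of_bijective (⊥ : SimpleGraph V).connectedComponentMk ⟨?_, ?_⟩).symm
  · intro x y hxy
    exact reachable_bot.mp (ConnectedComponent.exact hxy)
  · exact fun c => c.ind fun v => ⟨v, rfl⟩


-- acyclic is antitone
lemma isAcyclic_mono {G H : SimpleGraph V} (hle : G ≤ H) (h : H.IsAcyclic) : G.IsAcyclic :=
  fun _ w hw => h (w.mapLe hle) (hw.mapLe hle)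

lemma forest_count [Fintype V] (A : Finset (Sym2 V)) (hA : ∀ e ∈ A, ¬ e.IsDiag) :
    (Fintype.card V ≤ Nat.card (fromEdgeSet (↑A : Set (Sym2 V))).ConnectedComponent + A.card) ∧
    ((fromEdgeSet (↑A : Set (Sym2 V))).IsAcyclic →
      Fintype.card V = Nat.card (fromEdgeSet (↑A : Set (Sym2 V))).ConnectedComponent + A.card)
    := by
  classical
  induction A using Finset.induction_on with
  | empty =>
    simp only [Finset.coe_empty, fromEdgeSet_empty, Finset.card_empty, card_cc_bot, add_zero]
    simp
  | @insert e A he ih =>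
    have hd : ¬ e.IsDiag := hA e (Finset.mem_insert_self e A)
    have hA' : ∀ e ∈ A, ¬ e.IsDiag := fun e' he' => hA e' (Finset.mem_insert_of_mem he')
    obtain ⟨hle, heq⟩ := ih hA'
    induction e using Sym2.ind with
    | _ u v =>
    have huv : u ≠ v := by simpa using hd
    have hset : fromEdgeSet (↑(insert s(u,v) A) : Set (Sym2 V))
        = fromEdgeSet (↑A : Set (Sym2 V)) ⊔ fromEdgeSet {s(u,v)} := by
      rw [Finset.coe_insert, Set.insert_eq, Set.union_comm, fromEdgeSet_union]
    have hcard : (insert s(u,v) A).card = A.card + 1 := Finset.card_insert_of_notMem he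
    set H := fromEdgeSet (↑A : Set (Sym2 V)) with hH
    by_cases hr : H.Reachable u v
    · have hcc : Nat.card (fromEdgeSet (↑(insert s(u,v) A) : Set (Sym2 V))).ConnectedComponent
          = Nat.card H.ConnectedComponent := by
        rw [hset]; exact card_cc_sup_edge_reach hr
      constructor
      · omega
      · intro hac
        exfalso
        rw [hset] at hac
        obtain ⟨w⟩ := hr
        set p := w.toPath with hp
        have hpe : ∀ e' ∈ (p : H.Walk u v).edges, e' ∈ (H ⊔ fromEdgeSet {s(u,v)}).edgeSet :=
          fun e' he' => edgeSet_mono le_sup_left ((p : H.Walk u v).edges_subset_edgeSet he')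
        set q := (p : H.Walk u v).transfer _ hpe with hq
        have hqp : q.IsPath := p.2.transfer hpe
        have hadj : (H ⊔ fromEdgeSet {s(u,v)}).Adj v u :=
          Or.inr (by rw [fromEdgeSet_adj]; exact ⟨Sym2.eq_swap ▸ rfl, huv.symm⟩)
        have hnotmem : s(v, u) ∉ q.edges := by
          rw [Walk.edges_transfer]
          intro hmem
          have : s(v, u) ∈ H.edgeSet := (p : H.Walk u v).edges_subset_edgeSet hmem
          rw [edgeSet_fromEdgeSet] at this
          exact he (by rw [← Sym2.eq_swap]; exact Finset.mem_coe.mp this.1)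
        exact hac _ ((Walk.cons_isCycle_iff q hadj).mpr ⟨hqp, hnotmem⟩)
    · have hcc : Nat.card (fromEdgeSet (↑(insert s(u,v) A) : Set (Sym2 V))).ConnectedComponent + 1
          = Nat.card H.ConnectedComponent := by
        rw [hset]; exact card_cc_sup_edge_not_reach huv hr
      constructor
      · omega
      · intro hac
        have hacH : H.IsAcyclic := isAcyclic_mono (by rw [hset]; exact le_sup_left) hac
        have := heq hacH
        omega

open Classical in
lemma cycle_cc [Fintype V] {G : SimpleGraph V} {a : V} {w : G.Walk a a} (hw : w.IsCycle) :
    Nat.card (fromEdgeSet (↑(w.edges.toFinset) : Set (Sym2 V))).ConnectedComponent + w.length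
      = Fintype.card V + 1 := by
  classical
  set C := w.edges.toFinset with hC
  set H := fromEdgeSet (↑C : Set (Sym2 V)) with hH
  have hCsub : ∀ e ∈ w.edges, e ∈ H.edgeSet := by
    intro e he
    rw [hH, edgeSet_fromEdgeSet]
    exact ⟨Finset.mem_coe.mpr (List.mem_toFinset.mpr he),
      G.not_isDiag_of_mem_edgeSet (w.edges_subset_edgeSet he)⟩
  set w' := w.transfer H hCsub with hw'
  have hsupp' : w'.support = w.support := Walk.support_transfer _ _
  set S := w.support.toFinset with hS
  have hScard : S.card = w.length := cycle_support_card hw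
  have hlenV : w.length ≤ Fintype.card V := hScard ▸ Finset.card_le_univ S
  have hasupp : ∀ x ∈ S, H.Reachable a x := by
    intro x hx
    have hx' : x ∈ w'.support := by rw [hsupp']; exact List.mem_toFinset.mp hx
    exact (w'.takeUntil x hx').reachable
  have hiso : ∀ x, x ∉ S → ∀ y, H.Reachable x y → x = y := by
    intro x hx y hr
    obtain ⟨p⟩ := hr
    cases p with
    | nil => rfl
    | @cons _ z _ hadj q =>
      exfalso
      have : s(x, z) ∈ H.edgeSet := hadj
      rw [hH, edgeSet_fromEdgeSet] at this
      have hmem : s(x, z) ∈ w.edges := List.mem_toFinset.mp (Finset.mem_coe.mp this.1)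
      exact hx (List.mem_toFinset.mpr (Walk.fst_mem_support_of_mem_edges w hmem))
  have hfin : Finite H.ConnectedComponent := Quot.finite _
  cases nonempty_fintype H.ConnectedComponent
  rw [Nat.card_eq_fintype_card]
  have haS : a ∈ S := List.mem_toFinset.mpr w.start_mem_support
  -- upper bound
  have hupper : Fintype.card H.ConnectedComponent ≤ (Fintype.card V - w.length) + 1 := by
    have himg : (Finset.univ : Finset H.ConnectedComponent)
        = Finset.univ.image H.connectedComponentMk := by
      refine (Finset.eq_univ_iff_forall.mpr ?_).symm
      exact fun c => c.ind fun v => Finset.mem_image_of_mem _ (Finset.mem_univ v)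
    have hsplit : (Finset.univ : Finset V) = (Finset.univ \ S) ∪ S := by
      rw [Finset.sdiff_union_of_subset (Finset.subset_univ S)]
    have himg2 : Finset.univ.image H.connectedComponentMk
        ⊆ (Finset.univ \ S).image H.connectedComponentMk ∪ {H.connectedComponentMk a} := by
      intro c hc
      obtain ⟨x, _, rfl⟩ := Finset.mem_image.mp hc
      by_cases hx : x ∈ S
      · exact Finset.mem_union_right _ (Finset.mem_singleton.mpr
          (ConnectedComponent.sound (hasupp x hx).symm))
      · exact Finset.mem_union_left _ (Finset.mem_image_of_mem _
          (Finset.mem_sdiff.mpr ⟨Finset.mem_univ x, hx⟩))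
    calc Fintype.card H.ConnectedComponent
        = (Finset.univ : Finset H.ConnectedComponent).card := Finset.card_univ.symm
      _ ≤ ((Finset.univ \ S).image H.connectedComponentMk ∪ {H.connectedComponentMk a}).card := by
          rw [himg]; exact Finset.card_le_card himg2
      _ ≤ ((Finset.univ \ S).image H.connectedComponentMk).card + 1 := by
          refine (Finset.card_union_le _ _).trans ?_; simp
      _ ≤ (Finset.univ \ S).card + 1 := by
          have := Finset.card_image_le (s := Finset.univ \ S) (f := H.connectedComponentMk)
          omega
      _ = (Fintype.card V - w.length) + 1 := by
          rw [Finset.card_sdiff_of_subset (Finset.subset_univ S), hScard, Finset.card_univ]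
  have hlower : (Fintype.card V - w.length) + 1 ≤ Fintype.card H.ConnectedComponent := by
    have hins : (insert a (Finset.univ \ S)).card = (Fintype.card V - w.length) + 1 := by
      rw [Finset.card_insert_of_notMem (fun hmem => (Finset.mem_sdiff.mp hmem).2 haS),
        Finset.card_sdiff_of_subset (Finset.subset_univ S), hScard, Finset.card_univ]
    rw [← hins, ← Finset.card_univ]
    refine Finset.card_le_card_of_injOn H.connectedComponentMk
      (fun _ _ => Finset.mem_univ _) ?_
    intro x hx y hy hxy
    have hrxy : H.Reachable x y := ConnectedComponent.exact hxy
    rcases Finset.mem_insert.mp hx with rfl | hx'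
    · rcases Finset.mem_insert.mp hy with rfl | hy'
      · rfl
      · exact (hiso y (fun hS' => (Finset.mem_sdiff.mp hy').2 hS') x hrxy.symm).symm
    · exact hiso x (fun hS' => (Finset.mem_sdiff.mp hx').2 hS') y hrxy
  omega


lemma girth_le_length {G : SimpleGraph V} {a : V} {w : G.Walk a a} (hw : w.IsCycle) :
    G.girth ≤ w.length := by
  have h1 : G.egirth ≤ (w.length : ℕ∞) :=
    iInf_le_of_le a (iInf_le_of_le w (iInf_le _ hw))
  have := ENat.toNat_le_toNat h1 (by simp)
  simpa [girth] using this

open Classical in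
lemma edges_toFinset_card {G : SimpleGraph V} {a : V} {w : G.Walk a a} (hw : w.IsCycle) :
    w.edges.toFinset.card = w.length := by
  rw [List.toFinset_card_of_nodup hw.edges_nodup, Walk.length_edges]

lemma fromEdgeSet_le_of_subset {G : SimpleGraph V} {A : Finset (Sym2 V)}
    (hsub : (↑A : Set (Sym2 V)) ⊆ G.edgeSet) : fromEdgeSet (↑A : Set (Sym2 V)) ≤ G :=
  le_of_le_of_eq (fromEdgeSet_mono hsub) (fromEdgeSet_edgeSet G)

open Classical in
lemma acyclic_of_card_lt [Fintype V] {G : SimpleGraph V} {g : ℕ} (hgir : G.girth = g)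
    {A : Finset (Sym2 V)} (hsub : (↑A : Set (Sym2 V)) ⊆ G.edgeSet) (hcard : A.card < g) :
    (fromEdgeSet (↑A : Set (Sym2 V))).IsAcyclic := by
  by_contra hnac
  rw [SimpleGraph.IsAcyclic] at hnac
  push_neg at hnac
  obtain ⟨b, w0, hw0⟩ := hnac
  have hle := fromEdgeSet_le_of_subset hsub
  have hC : w0.edges.toFinset ⊆ A := by
    intro e he
    have := w0.edges_subset_edgeSet (List.mem_toFinset.mp he)
    rw [edgeSet_fromEdgeSet] at this
    exact Finset.mem_coe.mp this.1
  have hw1 : (w0.mapLe hle).IsCycle := hw0.mapLe hle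
  have hlen : (w0.mapLe hle).length = w0.length := Walk.length_map _ _
  have h1 : g ≤ w0.length := by
    have := girth_le_length hw1
    rw [hgir, hlen] at this
    exact this
  have h2 : w0.length ≤ A.card := by
    rw [← edges_toFinset_card hw0]
    exact Finset.card_le_card hC
  omega

open Classical in
lemma cyclic_classify [Fintype V] {G : SimpleGraph V} {g : ℕ} (hgir : G.girth = g)
    (hcyc : ¬ G.IsAcyclic) {A : Finset (Sym2 V)} (hsub : (↑A : Set (Sym2 V)) ⊆ G.edgeSet)
    (hnac : ¬ (fromEdgeSet (↑A : Set (Sym2 V))).IsAcyclic) :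
    g + Nat.card (fromEdgeSet (↑A : Set (Sym2 V))).ConnectedComponent ≤ Fintype.card V + 1 ∧
    (g + Nat.card (fromEdgeSet (↑A : Set (Sym2 V))).ConnectedComponent = Fintype.card V + 1 →
      A.card = g) := by
  classical
  have hg3 : 3 ≤ g := by have := SimpleGraph.three_le_girth hcyc; omega
  rw [SimpleGraph.IsAcyclic] at hnac
  push_neg at hnac
  obtain ⟨b, w0, hw0⟩ := hnac
  have hle := fromEdgeSet_le_of_subset hsub
  have hedges : ∀ e ∈ w0.edges, e ∈ G.edgeSet := by
    intro e he
    have := w0.edges_subset_edgeSet he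
    rw [edgeSet_fromEdgeSet] at this
    exact hsub this.1
  set w1 := w0.transfer G hedges with hw1def
  have hw1 : w1.IsCycle := hw0.transfer hedges
  have hlen1 : w1.length = w0.length := Walk.length_transfer _ _
  have hedges1 : w1.edges = w0.edges := Walk.edges_transfer _ _
  set L := w1.length with hL
  have hgL : g ≤ L := by have := girth_le_length hw1; rw [hgir] at this; exact this
  set C := w1.edges.toFinset with hCdef
  have hCA : C ⊆ A := by
    intro e he
    have h2 := w0.edges_subset_edgeSet (by rw [← hedges1]; exact List.mem_toFinset.mp he)
    rw [edgeSet_fromEdgeSet] at h2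
    exact Finset.mem_coe.mp h2.1
  have hcycC : Nat.card (fromEdgeSet (↑C : Set (Sym2 V))).ConnectedComponent + L
      = Fintype.card V + 1 := cycle_cc hw1
  have hmono : Nat.card (fromEdgeSet (↑A : Set (Sym2 V))).ConnectedComponent
      ≤ Nat.card (fromEdgeSet (↑C : Set (Sym2 V))).ConnectedComponent :=
    card_cc_le (fromEdgeSet_mono (Finset.coe_subset.mpr hCA))
  refine ⟨by omega, ?_⟩
  intro heq
  have hLg : L = g := by omega
  have hccEq : Nat.card (fromEdgeSet (↑A : Set (Sym2 V))).ConnectedComponent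
      = Nat.card (fromEdgeSet (↑C : Set (Sym2 V))).ConnectedComponent := by omega
  -- show A ⊆ C
  have hAC : A ⊆ C := by
    by_contra hnsub
    obtain ⟨e, heA, heC⟩ := Finset.not_subset.mp hnsub
    induction e using Sym2.ind with
    | _ u v =>
    have huv : u ≠ v := by
      have := G.not_isDiag_of_mem_edgeSet (hsub (Finset.mem_coe.mpr heA))
      simpa using this
    set B := insert s(u,v) C with hB
    have hBA : B ⊆ A := Finset.insert_subset heA hCA
    have hBset : fromEdgeSet (↑B : Set (Sym2 V))
        = fromEdgeSet (↑C : Set (Sym2 V)) ⊔ fromEdgeSet {s(u,v)} := by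
      rw [Finset.coe_insert, Set.insert_eq, Set.union_comm, fromEdgeSet_union]
    have hc1 : Nat.card (fromEdgeSet (↑A : Set (Sym2 V))).ConnectedComponent
        ≤ Nat.card (fromEdgeSet (↑B : Set (Sym2 V))).ConnectedComponent :=
      card_cc_le (fromEdgeSet_mono (Finset.coe_subset.mpr hBA))
    have hc2 : Nat.card (fromEdgeSet (↑B : Set (Sym2 V))).ConnectedComponent
        ≤ Nat.card (fromEdgeSet (↑C : Set (Sym2 V))).ConnectedComponent :=
      card_cc_le (fromEdgeSet_mono (Finset.coe_subset.mpr (Finset.subset_insert _ _)))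
    by_cases hr : (fromEdgeSet (↑C : Set (Sym2 V))).Reachable u v
    · -- chord argument
      -- u and v are on the support of w1
      have hsupmem : ∀ x z : V, (fromEdgeSet (↑C : Set (Sym2 V))).Reachable x z → x ≠ z →
          x ∈ w1.support := by
        intro x z hxz hne
        obtain ⟨p⟩ := hxz
        cases p with
        | nil => exact absurd rfl hne
        | @cons _ z' _ hadj q =>
          have : s(x, z') ∈ (fromEdgeSet (↑C : Set (Sym2 V))).edgeSet := hadj
          rw [edgeSet_fromEdgeSet] at this
          exact Walk.fst_mem_support_of_mem_edges w1
            (List.mem_toFinset.mp (Finset.mem_coe.mp this.1))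
      have hu1 : u ∈ w1.support := hsupmem u v hr huv
      have hv1 : v ∈ w1.support := hsupmem v u hr.symm (Ne.symm huv)
      set W2 := w1.rotate u hu1 with hW2def
      have hW2 : W2.IsCycle := hw1.rotate hu1
      have hlen2 : W2.length = L := by
        have hspec := congr_arg Walk.length (w1.take_spec hu1)
        rw [Walk.length_append] at hspec
        rw [hW2def, Walk.rotate, Walk.length_append]
        omega
      have hv2 : v ∈ W2.support := by
        have hvtail : v ∈ w1.support.tail :=
          mem_tail_of_closed (by have := hw1.three_le_length; omega) hv1
        have : v ∈ W2.support.tail := (Walk.support_rotate w1 u hu1).mem_iff.mpr hvtail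
        exact List.mem_of_mem_tail this
      have hedge2 : s(u, v) ∉ W2.edges := by
        intro hmem
        have : s(u, v) ∈ w1.edges := (Walk.rotate_edges w1 u hu1).mem_iff.mp hmem
        exact heC (List.mem_toFinset.mpr this)
      set p := W2.takeUntil v hv2 with hpdef
      set q := W2.dropUntil v hv2 with hqdef
      have hspec : p.append q = W2 := W2.take_spec hv2
      have hsup : W2.support.tail = p.support.tail ++ q.support.tail := by
        have h1 : W2.support = p.support ++ q.support.tail := by
          rw [← hspec, Walk.support_append]
        rw [Walk.support_eq_cons W2, Walk.support_eq_cons p, List.cons_append] at h1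
        simpa using congrArg List.tail h1
      have hnodup := hW2.support_nodup
      rw [hsup, List.nodup_append] at hnodup
      obtain ⟨hnp, hnq, hdisj⟩ := hnodup
      have hplen : p.length ≠ 0 := fun h0 => huv (Walk.eq_of_length_eq_zero h0)
      have hqlen : q.length ≠ 0 := fun h0 => huv (Walk.eq_of_length_eq_zero h0).symm
      have hvp : v ∈ p.support.tail := end_mem_tail p hplen
      have huq : u ∈ q.support.tail := end_mem_tail q hqlen
      have hppath : p.IsPath := by
        refine Walk.IsPath.mk' ?_
        rw [Walk.support_eq_cons p]
        exact List.nodup_cons.mpr ⟨fun hmem => hdisj _ hmem _ huq rfl, hnp⟩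
      have hqpath : q.IsPath := by
        refine Walk.IsPath.mk' ?_
        rw [Walk.support_eq_cons q]
        exact List.nodup_cons.mpr ⟨fun hmem => hdisj _ hvp _ hmem rfl, hnq⟩
      have hedgesW2 : W2.edges = p.edges ++ q.edges := by
        rw [← hspec, Walk.edges_append]
      have hep : s(u, v) ∉ p.edges := fun hm =>
        hedge2 (by rw [hedgesW2]; exact List.mem_append_left _ hm)
      have heq2 : s(u, v) ∉ q.edges := fun hm =>
        hedge2 (by rw [hedgesW2]; exact List.mem_append_right _ hm)
      have hadjuv : G.Adj u v := G.mem_edgeSet.mp (hsub (Finset.mem_coe.mpr heA))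
      have hcyc1 : (Walk.cons hadjuv.symm p).IsCycle :=
        (Walk.cons_isCycle_iff p hadjuv.symm).mpr
          ⟨hppath, fun hm => hep (by rwa [Sym2.eq_swap] at hm)⟩
      have hcyc2 : (Walk.cons hadjuv q).IsCycle :=
        (Walk.cons_isCycle_iff q hadjuv).mpr ⟨hqpath, heq2⟩
      have hg1 : g ≤ p.length + 1 := by
        have := girth_le_length hcyc1
        rw [hgir] at this
        simpa [Walk.length_cons] using this
      have hg2 : g ≤ q.length + 1 := by
        have := girth_le_length hcyc2
        rw [hgir] at this
        simpa [Walk.length_cons] using this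
      have hsum : p.length + q.length = L := by
        have hx := congr_arg Walk.length hspec
        rw [Walk.length_append] at hx
        omega
      omega
    · have := card_cc_sup_edge_not_reach huv hr
      rw [← hBset] at this
      omega
  have hAeqC : A = C := Finset.Subset.antisymm hAC hCA
  rw [hAeqC, hCdef, edges_toFinset_card hw1]
  omega


open Classical in
lemma edgeSetType_supp (A : Finset (Sym2 V)) [Fintype V]
    (c : (SimpleGraph.fromEdgeSet (↑A : Set (Sym2 V))).ConnectedComponent) :
    c.supp.ncard = (Finset.univ.filter
      (fun v => (SimpleGraph.fromEdgeSet (↑A : Set (Sym2 V))).connectedComponentMk v = c)).card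
    := by
  have h1 : c.supp = ↑(Finset.univ.filter
      (fun v => (SimpleGraph.fromEdgeSet (↑A : Set (Sym2 V))).connectedComponentMk v = c)) := by
    ext v
    simp [ConnectedComponent.mem_supp_iff]
  rw [h1, Set.ncard_coe_finset]

open Classical in
lemma edgeSetType_sum [Fintype V] (A : Finset (Sym2 V)) :
    (edgeSetType A).sum = Fintype.card V := by
  classical
  rw [edgeSetType]
  rw [show (((Finset.univ : Finset V).image
      (fun v => (SimpleGraph.fromEdgeSet (↑A : Set (Sym2 V))).connectedComponentMk v)).val.map
      (fun c => c.supp.ncard)).sum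
    = ∑ c ∈ ((Finset.univ : Finset V).image
      (fun v => (SimpleGraph.fromEdgeSet (↑A : Set (Sym2 V))).connectedComponentMk v)),
      c.supp.ncard from rfl]
  rw [← Finset.card_univ]
  rw [Finset.card_eq_sum_card_fiberwise (f := fun v =>
      (SimpleGraph.fromEdgeSet (↑A : Set (Sym2 V))).connectedComponentMk v)
    (fun v _ => Finset.mem_image_of_mem _ (Finset.mem_univ v))]
  exact Finset.sum_congr rfl fun c _ => edgeSetType_supp A c

open Classical in
lemma edgeSetType_pos [Fintype V] (A : Finset (Sym2 V)) :
    ∀ i ∈ edgeSetType A, 0 < i := by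
  intro i hi
  rw [edgeSetType] at hi
  obtain ⟨c, hc, rfl⟩ := Multiset.mem_map.mp hi
  have hc' := Finset.mem_image.mp hc
  obtain ⟨v, _, rfl⟩ := hc'
  rw [Set.ncard_pos (Set.toFinite _)]
  exact ⟨v, rfl⟩

open Classical in
lemma edgeSetType_card [Fintype V] (A : Finset (Sym2 V)) :
    Multiset.card (edgeSetType A)
      = Nat.card (SimpleGraph.fromEdgeSet (↑A : Set (Sym2 V))).ConnectedComponent := by
  classical
  rw [edgeSetType, Multiset.card_map]
  have himg : ((Finset.univ : Finset V).image
      (fun v => (SimpleGraph.fromEdgeSet (↑A : Set (Sym2 V))).connectedComponentMk v))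
      = (Finset.univ : Finset _) := by
    refine Finset.eq_univ_iff_forall.mpr ?_
    exact fun c => c.ind fun v => Finset.mem_image_of_mem _ (Finset.mem_univ v)
  show ((Finset.univ : Finset V).image
      (fun v => (SimpleGraph.fromEdgeSet (↑A : Set (Sym2 V))).connectedComponentMk v)).card = _
  rw [himg, Finset.card_univ, Nat.card_eq_fintype_card]

open Classical in
noncomputable def partOf [Fintype V] (A : Finset (Sym2 V)) : (Fintype.card V).Partition :=
  ⟨edgeSetType A, fun hi => edgeSetType_pos A _ hi, edgeSetType_sum A⟩

open Classical in
lemma sum_part [Fintype V] (G : SimpleGraph V) (k : ℕ) :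
    (∑ p : (Fintype.card V).Partition, if p.parts.card = k then cCoeff G p.parts else 0) =
    ∑ A ∈ G.edgeFinset.powerset,
      if Multiset.card (edgeSetType A) = k then (-1 : ℤ) ^ A.card else 0 := by
  classical
  have step1 : (∑ p : (Fintype.card V).Partition,
      if p.parts.card = k then cCoeff G p.parts else 0)
      = ∑ p : (Fintype.card V).Partition, ∑ A ∈ (Finset.univ : Finset (Sym2 V)).powerset,
        (if p.parts.card = k then
          (if (↑A : Set (Sym2 V)) ⊆ G.edgeSet ∧ edgeSetType A = p.parts
            then (-1 : ℤ) ^ A.card else 0) else 0) := by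
    refine Finset.sum_congr rfl fun p _ => ?_
    by_cases h : p.parts.card = k
    · simp only [h, if_true, cCoeff]
    · simp only [h, if_false, Finset.sum_const_zero]
  rw [step1, Finset.sum_comm]
  have step2 : ∀ A ∈ (Finset.univ : Finset (Sym2 V)).powerset,
      (∑ p : (Fintype.card V).Partition,
        (if p.parts.card = k then
          (if (↑A : Set (Sym2 V)) ⊆ G.edgeSet ∧ edgeSetType A = p.parts
            then (-1 : ℤ) ^ A.card else 0) else 0))
      = (if (↑A : Set (Sym2 V)) ⊆ G.edgeSet then
          (if Multiset.card (edgeSetType A) = k then (-1 : ℤ) ^ A.card else 0) else 0) := by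
    intro A _
    rw [Finset.sum_eq_single (partOf A)]
    · have hparts : (partOf A).parts = edgeSetType A := rfl
      rw [hparts]
      by_cases h1 : Multiset.card (edgeSetType A) = k
      · by_cases h2 : (↑A : Set (Sym2 V)) ⊆ G.edgeSet
        · simp [h1, h2]
        · simp [h1, h2]
      · simp [h1]
    · intro p _ hne
      by_cases h1 : p.parts.card = k
      · rw [if_pos h1, if_neg]
        rintro ⟨-, h3⟩
        exact hne (Nat.Partition.ext h3.symm)
      · rw [if_neg h1]
    · intro h
      exact absurd (Finset.mem_univ _) h
  rw [Finset.sum_congr rfl step2]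
  have step3 : ∀ A : Finset (Sym2 V),
      ((↑A : Set (Sym2 V)) ⊆ G.edgeSet) ↔ A ∈ G.edgeFinset.powerset := by
    intro A
    rw [Finset.mem_powerset, ← Finset.coe_subset, SimpleGraph.coe_edgeFinset]
  calc ∑ A ∈ (Finset.univ : Finset (Sym2 V)).powerset,
        (if (↑A : Set (Sym2 V)) ⊆ G.edgeSet then
          (if Multiset.card (edgeSetType A) = k then (-1 : ℤ) ^ A.card else 0) else 0)
      = ∑ A ∈ (Finset.univ : Finset (Sym2 V)).powerset,
        (if A ∈ G.edgeFinset.powerset then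
          (if Multiset.card (edgeSetType A) = k then (-1 : ℤ) ^ A.card else 0) else 0) := by
        refine Finset.sum_congr rfl fun A _ => ?_
        rw [if_congr (step3 A) rfl rfl]
    _ = ∑ A ∈ (Finset.univ : Finset (Sym2 V)).powerset ∩ G.edgeFinset.powerset,
        (if Multiset.card (edgeSetType A) = k then (-1 : ℤ) ^ A.card else 0) :=
        Finset.sum_ite_mem _ _ _
    _ = ∑ A ∈ G.edgeFinset.powerset,
        (if Multiset.card (edgeSetType A) = k then (-1 : ℤ) ^ A.card else 0) := by
        rw [Finset.inter_eq_right.mpr (fun A _ => Finset.mem_powerset.mpr (Finset.subset_univ A))]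


open Classical in
noncomputable def ccOf [Fintype V] (A : Finset (Sym2 V)) : ℕ :=
  Nat.card (fromEdgeSet (↑A : Set (Sym2 V))).ConnectedComponent

open Classical in
lemma main_sum [Fintype V] (G : SimpleGraph V) (k : ℕ) :
    (∑ p : (Fintype.card V).Partition, if p.parts.card = k then cCoeff G p.parts else 0) =
    ∑ A ∈ G.edgeFinset.powerset,
      if ccOf A = k then (-1 : ℤ) ^ A.card else 0 := by
  rw [sum_part]
  exact Finset.sum_congr rfl fun A _ => by simp only [ccOf, edgeSetType_card]; congr

lemma subset_edgeSet_of_subset {G : SimpleGraph V} [Fintype V] {A : Finset (Sym2 V)}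
    [Fintype ↥G.edgeSet] (h : A ⊆ G.edgeFinset) : (↑A : Set (Sym2 V)) ⊆ G.edgeSet := by
  rw [← SimpleGraph.coe_edgeFinset]
  exact Finset.coe_subset.mpr h

lemma diag_free {G : SimpleGraph V} {A : Finset (Sym2 V)}
    (h : (↑A : Set (Sym2 V)) ⊆ G.edgeSet) : ∀ e ∈ A, ¬ e.IsDiag :=
  fun e he => G.not_isDiag_of_mem_edgeSet (h (Finset.mem_coe.mpr he))

open Classical in
lemma bullet2 [Fintype V] {G : SimpleGraph V} {g k : ℕ} (hgir : G.girth = g)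
    (hcyc : ¬ G.IsAcyclic) (hgn : g ≤ Fintype.card V)
    (hk1 : Fintype.card V - g + 1 < k) (hk2 : k ≤ Fintype.card V) :
    (∑ A ∈ G.edgeFinset.powerset,
      if ccOf A = k then (-1 : ℤ) ^ A.card else 0)
    = (-1 : ℤ) ^ (Fintype.card V - k)
        * (G.edgeFinset.card.choose (Fintype.card V - k) : ℤ) := by
  classical
  have hg3 : 3 ≤ g := by
    have := SimpleGraph.three_le_girth hcyc
    omega
  rw [← Finset.sum_filter]
  have hfeq : (G.edgeFinset.powerset.filter (fun A => ccOf A = k))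
      = G.edgeFinset.powersetCard (Fintype.card V - k) := by
    ext A
    rw [Finset.mem_filter, Finset.mem_powerset, Finset.mem_powersetCard]
    simp only [ccOf]
    constructor
    · rintro ⟨hsub, hcc⟩
      refine ⟨hsub, ?_⟩
      have hsub' := subset_edgeSet_of_subset hsub
      by_cases hac : (fromEdgeSet (↑A : Set (Sym2 V))).IsAcyclic
      · have := (forest_count A (diag_free hsub')).2 hac
        omega
      · have := (cyclic_classify hgir hcyc hsub' hac).1
        omega
    · rintro ⟨hsub, hcard⟩
      have hsub' := subset_edgeSet_of_subset hsub
      have hac : (fromEdgeSet (↑A : Set (Sym2 V))).IsAcyclic :=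
        acyclic_of_card_lt hgir hsub' (by omega)
      have := (forest_count A (diag_free hsub')).2 hac
      exact ⟨hsub, by omega⟩
  rw [hfeq]
  rw [Finset.sum_congr rfl (fun A hA =>
    by rw [(Finset.mem_powersetCard.mp hA).2] :
    ∀ A ∈ G.edgeFinset.powersetCard (Fintype.card V - k), (-1 : ℤ) ^ A.card
      = (-1 : ℤ) ^ (Fintype.card V - k))]
  rw [Finset.sum_const, Finset.card_powersetCard, nsmul_eq_mul, mul_comm]

open Classical in
lemma bullet1 [Fintype V] {G : SimpleGraph V} {g : ℕ} (hgir : G.girth = g)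
    (hcyc : ¬ G.IsAcyclic) (hgn : g ≤ Fintype.card V) :
    (∑ A ∈ G.edgeFinset.powerset,
      if ccOf A = Fintype.card V - g + 1 then (-1 : ℤ) ^ A.card else 0)
    ≠ (-1 : ℤ) ^ (g - 1) * (G.edgeFinset.card.choose (g - 1) : ℤ) := by
  classical
  have hg3 : 3 ≤ g := by
    have := SimpleGraph.three_le_girth hcyc
    omega
  rw [← Finset.sum_filter]
  set S := G.edgeFinset.powerset.filter (fun A =>
      ccOf A = Fintype.card V - g + 1) with hS
  set P := fun A : Finset (Sym2 V) => (fromEdgeSet (↑A : Set (Sym2 V))).IsAcyclic with hPdef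
  rw [← Finset.sum_filter_add_sum_filter_not S P]
  have h1 : S.filter P = G.edgeFinset.powersetCard (g - 1) := by
    ext A
    rw [Finset.mem_filter, hS, Finset.mem_filter, Finset.mem_powerset,
      Finset.mem_powersetCard]
    simp only [ccOf]
    constructor
    · rintro ⟨⟨hsub, hcc⟩, hac⟩
      have hsub' := subset_edgeSet_of_subset hsub
      have := (forest_count A (diag_free hsub')).2 hac
      exact ⟨hsub, by omega⟩
    · rintro ⟨hsub, hcard⟩
      have hsub' := subset_edgeSet_of_subset hsub
      have hac : P A := acyclic_of_card_lt hgir hsub' (by omega)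
      have := (forest_count A (diag_free hsub')).2 hac
      exact ⟨⟨hsub, by omega⟩, hac⟩
  have h2 : ∀ A ∈ S.filter (fun A => ¬ P A), A.card = g := by
    intro A hA
    rw [Finset.mem_filter, hS, Finset.mem_filter, Finset.mem_powerset] at hA
    obtain ⟨⟨hsub, hcc⟩, hnac⟩ := hA
    simp only [ccOf] at hcc
    have hsub' := subset_edgeSet_of_subset hsub
    exact (cyclic_classify hgir hcyc hsub' hnac).2 (by omega)
  -- the girth cycle provides a member of the cyclic part
  obtain ⟨a, w, hw, hlenw⟩ := SimpleGraph.exists_girth_eq_length.mpr hcyc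
  rw [hgir] at hlenw
  have hwg : w.length = g := hlenw.symm
  set A0 := w.edges.toFinset with hA0
  have hA0sub : (↑A0 : Set (Sym2 V)) ⊆ G.edgeSet := fun e he =>
    w.edges_subset_edgeSet (List.mem_toFinset.mp he)
  have hA0edges : ∀ e ∈ w.edges, e ∈ (fromEdgeSet (↑A0 : Set (Sym2 V))).edgeSet := by
    intro e he
    rw [edgeSet_fromEdgeSet]
    exact ⟨Finset.mem_coe.mpr (List.mem_toFinset.mpr he),
      G.not_isDiag_of_mem_edgeSet (w.edges_subset_edgeSet he)⟩
  set w' := w.transfer _ hA0edges with hw'def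
  have hw' : w'.IsCycle := hw.transfer _
  have hnacA0 : ¬ P A0 := fun hac => hac _ hw'
  have hccA0 : Nat.card (fromEdgeSet (↑A0 : Set (Sym2 V))).ConnectedComponent + g
      = Fintype.card V + 1 := by
    have hcc := cycle_cc hw'
    rw [Walk.edges_transfer, Walk.length_transfer, hwg] at hcc
    exact hcc
  have hA0mem : A0 ∈ S.filter (fun A => ¬ P A) := by
    rw [Finset.mem_filter, hS, Finset.mem_filter, Finset.mem_powerset]
    refine ⟨⟨?_, by simp only [ccOf]; omega⟩, hnacA0⟩
    intro e he
    exact SimpleGraph.mem_edgeFinset.mpr (w.edges_subset_edgeSet (List.mem_toFinset.mp he))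
  have hsum1 : (∑ A ∈ S.filter P, (-1 : ℤ) ^ A.card)
      = (-1 : ℤ) ^ (g - 1) * (G.edgeFinset.card.choose (g - 1) : ℤ) := by
    rw [h1]
    rw [Finset.sum_congr rfl (fun A hA =>
      by rw [(Finset.mem_powersetCard.mp hA).2] :
      ∀ A ∈ G.edgeFinset.powersetCard (g - 1), (-1 : ℤ) ^ A.card = (-1 : ℤ) ^ (g - 1))]
    rw [Finset.sum_const, Finset.card_powersetCard, nsmul_eq_mul, mul_comm]
  have hsum2 : (∑ A ∈ S.filter (fun A => ¬ P A), (-1 : ℤ) ^ A.card)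
      = ((S.filter (fun A => ¬ P A)).card : ℤ) * (-1 : ℤ) ^ g := by
    rw [Finset.sum_congr rfl (fun A hA => by rw [h2 A hA] :
      ∀ A ∈ S.filter (fun A => ¬ P A), (-1 : ℤ) ^ A.card = (-1 : ℤ) ^ g)]
    rw [Finset.sum_const, nsmul_eq_mul]
  rw [hsum1, hsum2]
  intro hcontra
  have ht : ((S.filter (fun A => ¬ P A)).card : ℤ) * (-1 : ℤ) ^ g = 0 := by linarith
  have ht0 : (S.filter (fun A => ¬ P A)).card = 0 := by
    rcases mul_eq_zero.mp ht with h | h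
    · exact_mod_cast h
    · exact absurd h (pow_ne_zero _ (by norm_num))
  have : 0 < (S.filter (fun A => ¬ P A)).card := Finset.card_pos.mpr ⟨A0, hA0mem⟩
  omega


end StmtAux

/-- Let `G` be a graph with `n` vertices and `m` edges containing at least one cycle, and let
`g` be its girth.  Then for `k = n − g + 1` the sum `Σ_{λ ⊢ n, ℓ(λ)=k} c_λ(G)` differs from
`(−1)^{n−k} C(m, n−k)`, while for every `k` with `n − g + 1 < k ≤ n` equality holds.
(Hence the girth of `G` is `n − k₀ + 1` where `k₀` is the largest such `k ≤ n` for which the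
inequality holds.) -/
theorem stmt_4 [Fintype V] (G : SimpleGraph V) (g : ℕ)
    (hcyc : ¬ G.IsAcyclic) (hg : G.girth = (g : ℕ∞)) :
    ((∑ p : (Fintype.card V).Partition,
        if p.parts.card = Fintype.card V - g + 1 then cCoeff G p.parts else 0) ≠
      (-1 : ℤ) ^ (Fintype.card V - (Fintype.card V - g + 1)) *
        ((Nat.card G.edgeSet).choose (Fintype.card V - (Fintype.card V - g + 1)) : ℤ)) ∧
    (∀ k : ℕ, Fintype.card V - g + 1 < k → k ≤ Fintype.card V →
      (∑ p : (Fintype.card V).Partition,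
          if p.parts.card = k then cCoeff G p.parts else 0) =
        (-1 : ℤ) ^ (Fintype.card V - k) *
          ((Nat.card G.edgeSet).choose (Fintype.card V - k) : ℤ)) := by
  classical
  have hgnat : G.girth = g := Nat.cast_inj.mp hg
  have hg3 : 3 ≤ g := by
    have := SimpleGraph.three_le_girth hcyc
    omega
  have hgn : g ≤ Fintype.card V := by
    obtain ⟨a, w, hw, hlenw⟩ := SimpleGraph.exists_girth_eq_length.mpr hcyc
    rw [hgnat] at hlenw
    rw [hlenw, ← StmtAux.cycle_support_card hw]
    exact Finset.card_le_univ _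
  have hmcard : Nat.card ↥G.edgeSet = G.edgeFinset.card := by
    rw [Nat.card_coe_set_eq, Set.ncard_eq_toFinset_card']; congr
  have hnk : Fintype.card V - (Fintype.card V - g + 1) = g - 1 := by omega
  constructor
  · rw [StmtAux.main_sum, hnk, hmcard]
    exact StmtAux.bullet1 hgnat hcyc hgn
  · intro k hk1 hk2
    rw [StmtAux.main_sum, hmcard]
    exact StmtAux.bullet2 hgnat hcyc hgn hk1 hk2
end

section
/- Let T be a tree, let A ⊆ E(T) be nonempty, and let S be a subtree of T. Then A ∪ K(A) = S if and only if L(S) ⊆ A ⊆ S, where L(S) is the set of leaf edges of S. -/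
open SimpleGraph Finset

variable {V : Type*}

/-- `S` is a subtree of `T`: a nonempty set of edges of `T` such that the subgraph consisting of
the edges of `S` together with their endpoints is connected. -/
def IsSubtreeSet (T : SimpleGraph V) (S : Set (Sym2 V)) : Prop :=
  S.Nonempty ∧ S ⊆ T.edgeSet ∧
    ((SimpleGraph.fromEdgeSet S).induce {v | ∃ e ∈ S, v ∈ e}).Connected

/-- The leaf edges of an edge set `S` : edges of `S` having an endpoint incident to no other
edge of `S`. -/
def leafEdges (S : Set (Sym2 V)) : Set (Sym2 V) :=
  {e | e ∈ S ∧ ∃ v ∈ e, ∀ e' ∈ S, v ∈ e' → e' = e}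

/-- The connector `K(A)` of a (nonempty) edge set `A` of a tree `T`: the minimal subset `K` of
`E(T) \ A` such that `A ∪ K` is a subtree of `T`. -/
def connector (T : SimpleGraph V) (A : Set (Sym2 V)) : Set (Sym2 V) :=
  ⋂₀ {B | B ⊆ T.edgeSet \ A ∧ IsSubtreeSet T (A ∪ B)}

namespace StmtAux

open SimpleGraph Walk

/-- The vertex support of an edge set. -/
def supp (S : Set (Sym2 V)) : Set V := {v | ∃ e ∈ S, v ∈ e}

lemma sym2_exists_mem (e : Sym2 V) : ∃ x, x ∈ e := by
  induction e using Sym2.ind with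
  | _ x y => exact ⟨x, Sym2.mem_mk_left x y⟩

lemma mem_support_of_mem_edges' {G : SimpleGraph V} {a b u : V} (p : G.Walk a b) {f : Sym2 V}
    (hf : f ∈ p.edges) (hu : u ∈ f) : u ∈ p.support := by
  induction f using Sym2.ind with
  | _ x y =>
    rcases Sym2.mem_iff.1 hu with rfl | rfl
    · exact p.fst_mem_support_of_mem_edges hf
    · exact p.snd_mem_support_of_mem_edges hf

lemma walk_edges_mem {S : Set (Sym2 V)} {a b : V} (p : (fromEdgeSet S).Walk a b)
    {f : Sym2 V} (hf : f ∈ p.edges) : f ∈ S := by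
  have := p.edges_subset_edgeSet hf
  rw [edgeSet_fromEdgeSet] at this
  exact this.1

lemma walk_support_subset_supp {S : Set (Sym2 V)} :
    ∀ {a b : V} (p : (fromEdgeSet S).Walk a b), a ∈ supp S → ∀ v ∈ p.support, v ∈ supp S := by
  intro a b p
  induction p with
  | nil => intro ha v hv; rw [Walk.support_nil, List.mem_singleton] at hv; exact hv ▸ ha
  | @cons a c b h q ih =>
    intro ha v hv
    have hedge : s(a, c) ∈ S := ((fromEdgeSet_adj _).1 h).1
    have hc : c ∈ supp S := ⟨_, hedge, Sym2.mem_mk_right a c⟩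
    rw [Walk.support_cons, List.mem_cons] at hv
    rcases hv with rfl | hv
    · exact ha
    · exact ih hc v hv

lemma induce_reachable {G : SimpleGraph V} {s : Set V} :
    ∀ {a b : V} (p : G.Walk a b) (hp : ∀ v ∈ p.support, v ∈ s),
      (G.induce s).Reachable ⟨a, hp a p.start_mem_support⟩ ⟨b, hp b p.end_mem_support⟩ := by
  intro a b p
  induction p with
  | nil => intro hp; exact Reachable.refl _
  | @cons a c b h q ih =>
    intro hp
    have hc : c ∈ s := hp c (by simp)
    have ha : a ∈ s := hp a (by simp)
    have step : (G.induce s).Adj ⟨a, ha⟩ ⟨c, hc⟩ := h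
    refine (Adj.reachable step).trans ?_
    have := ih (fun v hv => hp v (by rw [Walk.support_cons]; exact List.mem_cons_of_mem _ hv))
    exact this

lemma reachable_of_induce {G : SimpleGraph V} {s : Set V} {a b : s}
    (h : (G.induce s).Reachable a b) : G.Reachable (a : V) (b : V) := by
  obtain ⟨p⟩ := h
  induction p with
  | nil => exact Reachable.refl _
  | @cons a c b h q ih => exact (Adj.reachable (show G.Adj _ _ from h)).trans ih

lemma isSubtreeSet_iff {T : SimpleGraph V} {S : Set (Sym2 V)} (hST : S ⊆ T.edgeSet) :
    IsSubtreeSet T S ↔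
      S.Nonempty ∧ ∀ a ∈ supp S, ∀ b ∈ supp S, (fromEdgeSet S).Reachable a b := by
  constructor
  · rintro ⟨h1, _, h3⟩
    refine ⟨h1, fun a ha b hb => ?_⟩
    exact reachable_of_induce (s := supp S) (a := ⟨a, ha⟩) (b := ⟨b, hb⟩) (h3 ⟨a, ha⟩ ⟨b, hb⟩)
  · rintro ⟨h1, h2⟩
    refine ⟨h1, hST, ?_⟩
    obtain ⟨e, he⟩ := h1
    obtain ⟨x, hx⟩ := sym2_exists_mem e
    haveI : Nonempty {v | ∃ e ∈ S, v ∈ e} := ⟨⟨x, ⟨e, he, hx⟩⟩⟩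
    refine ⟨fun a b => ?_⟩
    obtain ⟨a, ha⟩ := a
    obtain ⟨b, hb⟩ := b
    obtain ⟨p⟩ := h2 a ha b hb
    exact induce_reachable p (walk_support_subset_supp p ha)

lemma subtree_reachable {T : SimpleGraph V} {S : Set (Sym2 V)} (h : IsSubtreeSet T S)
    {a b : V} (ha : a ∈ supp S) (hb : b ∈ supp S) : (fromEdgeSet S).Reachable a b :=
  ((isSubtreeSet_iff h.2.1).1 h).2 a ha b hb

section Tree

variable {T : SimpleGraph V}

/-- The unique path in a tree between two vertices. -/
noncomputable def tp (hT : T.IsTree) (a b : V) : T.Walk a b :=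
  (hT.existsUnique_path a b).choose

lemma tp_isPath (hT : T.IsTree) (a b : V) : (tp hT a b).IsPath :=
  (hT.existsUnique_path a b).choose_spec.1

lemma tp_unique (hT : T.IsTree) {a b : V} {p : T.Walk a b} (hp : p.IsPath) :
    p = tp hT a b :=
  (hT.existsUnique_path a b).choose_spec.2 p hp

lemma tp_length (hT : T.IsTree) (a b : V) : (tp hT a b).length = T.dist a b := by
  classical
  obtain ⟨w, hw⟩ := (hT.isConnected.preconnected a b).exists_walk_length_eq_dist
  have h1 : w.bypass = tp hT a b := tp_unique hT w.bypass_isPath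
  have h2 := Walk.length_bypass_le w
  rw [h1] at h2
  have h3 := dist_le (tp hT a b)
  omega

/-- Any walk (in a subgraph given by an edge set) between two vertices contains every edge of
the tree path between them. -/
lemma edge_mem_of_walk (hT : T.IsTree) {S : Set (Sym2 V)} (hS : S ⊆ T.edgeSet) {a b : V}
    (w : (fromEdgeSet S).Walk a b) {e : Sym2 V} (he : e ∈ (tp hT a b).edges) : e ∈ S := by
  classical
  have hw : ∀ f ∈ w.edges, f ∈ T.edgeSet := fun f hf => hS (walk_edges_mem w hf)
  set w' := w.transfer T hw with hw'
  have h1 : w'.bypass = tp hT a b := tp_unique hT w'.bypass_isPath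
  have h2 : e ∈ w'.edges := w'.edges_bypass_subset (h1 ▸ he)
  rw [hw', Walk.edges_transfer] at h2
  exact walk_edges_mem w h2

lemma isPath_concat {G : SimpleGraph V} {a b c : V} {p : G.Walk a b} (hp : p.IsPath)
    (h : G.Adj b c) (hc : c ∉ p.support) : (p.concat h).IsPath := by
  rw [Walk.isPath_def, Walk.support_concat]
  exact List.Nodup.append (hp.support_nodup) (List.nodup_singleton c)
    (by intro v hv hv'; rw [List.mem_singleton] at hv'; exact hc (hv' ▸ hv))

/-- In a tree, if `dist v y ≤ dist v x` and `x ~ y`, then `x` is the far endpoint: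
`dist v x = dist v y + 1` and the edge `s(x,y)` lies on the tree path from `v` to `x`. -/
lemma step_far (hT : T.IsTree) {v x y : V} (hxy : T.Adj x y)
    (hd : T.dist v y ≤ T.dist v x) :
    T.dist v x = T.dist v y + 1 ∧ s(x, y) ∈ (tp hT v x).edges := by
  classical
  have hx : x ∉ (tp hT v y).support := by
    intro hx
    have h1 : ((tp hT v y).takeUntil x hx).length + ((tp hT v y).dropUntil x hx).length
        = (tp hT v y).length := by
      rw [← Walk.length_append, Walk.take_spec]
    have h2 : T.dist v x ≤ ((tp hT v y).takeUntil x hx).length := dist_le _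
    have h3 : ((tp hT v y).dropUntil x hx).length ≠ 0 := by
      intro h0
      exact hxy.ne (Walk.eq_of_length_eq_zero h0)
    have h4 := tp_length hT v y
    omega
  have hP : ((tp hT v y).concat hxy.symm).IsPath :=
    isPath_concat (tp_isPath hT v y) hxy.symm hx
  have heq : (tp hT v y).concat hxy.symm = tp hT v x := tp_unique hT hP
  constructor
  · have hlen := congrArg Walk.length heq
    rw [Walk.length_concat, tp_length hT v x, tp_length hT v y] at hlen
    omega
  · rw [← heq, Walk.edges_concat]
    rw [List.concat_eq_append, List.mem_append, List.mem_singleton]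
    exact Or.inr Sym2.eq_swap

/-- In a path, there is at most one edge containing the final vertex. -/
lemma eq_of_mem_edges_end {G : SimpleGraph V} :
    ∀ {a b : V} {p : G.Walk a b}, p.IsPath →
      ∀ {e₁ e₂ : Sym2 V}, e₁ ∈ p.edges → e₂ ∈ p.edges → b ∈ e₁ → b ∈ e₂ → e₁ = e₂ := by
  intro a b p
  induction p with
  | nil => intro _ e₁ e₂ h1; simp at h1
  | @cons a c b h q ih =>
    intro hp e₁ e₂ h1 h2 hb1 hb2
    have hpq : q.IsPath := hp.of_cons
    have hanotin : a ∉ q.support := (Walk.cons_isPath_iff h q).1 hp |>.2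
    have key : ∀ {e : Sym2 V}, e ∈ (Walk.cons h q).edges → b ∈ e → e = s(a, c) → q.Nil := by
      intro e _ hbe hea
      subst hea
      rcases Sym2.mem_iff.1 hbe with rfl | rfl
      · exact absurd q.end_mem_support hanotin
      · cases q with
        | nil => exact Walk.Nil.nil
        | cons h' q' =>
          exfalso
          have : b ∈ q'.support := by
            have := q'.end_mem_support
            exact this
          have hnodup := hpq.support_nodup
          rw [Walk.support_cons] at hnodup
          exact (List.nodup_cons.1 hnodup).1 this
    rw [Walk.edges_cons, List.mem_cons] at h1 h2
    rcases h1 with h1 | h1 <;> rcases h2 with h2 | h2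
    · rw [h1, h2]
    · exfalso
      have hnil := key (by rw [Walk.edges_cons, h1]; exact List.mem_cons_self) hb1 h1
      have : q.edges = [] := by
        cases q with
        | nil => rfl
        | cons h' q' => exact absurd hnil (by simp)
      rw [this] at h2; simp at h2
    · exfalso
      have hnil := key (by rw [Walk.edges_cons, h2]; exact List.mem_cons_self) hb2 h2
      have : q.edges = [] := by
        cases q with
        | nil => rfl
        | cons h' q' => exact absurd hnil (by simp)
      rw [this] at h1; simp at h1
    · exact ih hpq h1 h2 hb1 hb2

/-- If `u` is incident only to the edge `e` in `S`, then a path in `fromEdgeSet S` between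
two vertices different from `u` avoids `u`. -/
lemma leaf_not_mem_support {S : Set (Sym2 V)} {e : Sym2 V} {u : V}
    (hu : ∀ f ∈ S, u ∈ f → f = e) :
    ∀ {a b : V} (p : (fromEdgeSet S).Walk a b), p.IsPath → a ≠ u → b ≠ u →
      u ∉ p.support := by
  intro a b p
  induction p with
  | nil => intro _ ha _ h; rw [Walk.support_nil, List.mem_singleton] at h; exact ha h.symm
  | @cons a c b h q ih =>
    intro hp ha hb hu'
    rw [Walk.support_cons, List.mem_cons] at hu'
    rcases hu' with rfl | hu'
    · exact ha rfl
    · by_cases hc : c = u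
      · subst hc
        have he1 : s(a, c) = e := hu _ ((fromEdgeSet_adj _).1 h).1 (Sym2.mem_mk_right a c)
        cases q with
        | nil => exact hb rfl
        | @cons _ d _ h' q' =>
          have he2 : s(c, d) = e := hu _ ((fromEdgeSet_adj _).1 h').1 (Sym2.mem_mk_left _ _)
          have heq2 : s(a, c) = s(c, d) := he1.trans he2.symm
          rw [Sym2.eq_iff] at heq2
          have hanotin : a ∉ (Walk.cons h' q').support := ((Walk.cons_isPath_iff h _).1 hp).2
          rcases heq2 with ⟨h1, h2⟩ | ⟨h1, h2⟩
          · exact ((fromEdgeSet_adj _).1 h).2 h1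
          · refine hanotin ?_
            rw [Walk.support_cons]
            exact List.mem_cons_of_mem _ (h1 ▸ q'.start_mem_support)
      · exact ih hp.of_cons hc hb hu'

end Tree

lemma supp_mono {S S' : Set (Sym2 V)} (h : S ⊆ S') : supp S ⊆ supp S' :=
  fun _ ⟨e, he, hv⟩ => ⟨e, h he, hv⟩

/-- Removing a leaf edge from a subtree (if something remains) yields a subtree. -/
lemma subtree_erase_leaf {T : SimpleGraph V} {S : Set (Sym2 V)} (hS : IsSubtreeSet T S)
    {e : Sym2 V} (he : e ∈ leafEdges S) (hne : (S \ {e}).Nonempty) :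
    IsSubtreeSet T (S \ {e}) := by
  obtain ⟨heS, u, hue, hu⟩ := he
  have hsub : S \ {e} ⊆ T.edgeSet := fun f hf => hS.2.1 hf.1
  classical
  rw [isSubtreeSet_iff hsub]
  refine ⟨hne, fun a ha b hb => ?_⟩
  have hne_u : ∀ {c : V}, c ∈ supp (S \ {e}) → c ≠ u := by
    rintro c ⟨f, hf, hcf⟩ rfl
    exact hf.2 (hu f hf.1 hcf)
  have ha' : a ∈ supp S := supp_mono Set.diff_subset ha
  have hb' : b ∈ supp S := supp_mono Set.diff_subset hb
  obtain ⟨w⟩ := subtree_reachable hS ha' hb'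
  set p := w.bypass with hp
  have hpp : p.IsPath := w.bypass_isPath
  have hup : u ∉ p.support :=
    leaf_not_mem_support hu p hpp (hne_u ha) (hne_u hb)
  have hedges : ∀ f ∈ p.edges, f ∈ (fromEdgeSet (S \ {e})).edgeSet := by
    intro f hf
    have hf1 : f ∈ w.edges := w.edges_bypass_subset hf
    have hf2 : f ∈ (fromEdgeSet S).edgeSet := w.edges_subset_edgeSet hf1
    rw [edgeSet_fromEdgeSet] at hf2 ⊢
    refine ⟨⟨hf2.1, ?_⟩, hf2.2⟩
    rintro rfl
    exact hup (mem_support_of_mem_edges' p hf hue)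
  classical
  exact ⟨p.transfer _ hedges⟩

/-- The key claim: a subtree `S'` of `S` containing all leaf edges of `S` equals `S`.
(One direction.) -/
lemma no_max {T : SimpleGraph V} (hT : T.IsTree) {S S' : Set (Sym2 V)}
    (hS : IsSubtreeSet T S) (hS' : IsSubtreeSet T S')
    (hleaf : leafEdges S ⊆ S') {v : V} (hv : v ∈ supp S') {x y : V}
    (heD : s(x, y) ∈ S \ S') (hd : T.dist v y ≤ T.dist v x)
    (hmax : ∀ w z : V, s(w, z) ∈ S \ S' →
      max (T.dist v w) (T.dist v z) ≤ max (T.dist v x) (T.dist v y)) : False := by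
  have hadj : T.Adj x y := (mem_edgeSet _).1 (hS.2.1 heD.1)
  obtain ⟨hdx, hmem⟩ := step_far hT hadj hd
  have hleafx : ∀ f ∈ S, x ∈ f → f = s(x, y) := by
    intro f hf hxf
    obtain ⟨w, rfl⟩ := Sym2.mem_iff_exists.1 hxf
    by_cases hfS' : s(x, w) ∈ S'
    · exfalso
      have hx' : x ∈ supp S' := ⟨_, hfS', Sym2.mem_mk_left x w⟩
      obtain ⟨wk⟩ := subtree_reachable hS' hv hx'
      exact heD.2 (edge_mem_of_walk hT hS'.2.1 wk hmem)
    · have hadj' : T.Adj x w := (mem_edgeSet _).1 (hS.2.1 hf)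
      rcases le_total (T.dist v w) (T.dist v x) with h | h
      · obtain ⟨_, hmem'⟩ := step_far hT hadj' h
        exact eq_of_mem_edges_end (tp_isPath hT v x) hmem' hmem
          (Sym2.mem_mk_left x w) (Sym2.mem_mk_left x y)
      · obtain ⟨hdw, _⟩ := step_far hT hadj'.symm h
        exfalso
        have h1 := hmax x w ⟨hf, hfS'⟩
        have h2 : T.dist v w ≤ max (T.dist v x) (T.dist v w) := le_max_right _ _
        have h3 : max (T.dist v x) (T.dist v y) = T.dist v x := max_eq_left hd
        omega
  exact heD.2 (hleaf ⟨heD.1, x, Sym2.mem_mk_left x y, hleafx⟩)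

lemma main_claim [Fintype V] {T : SimpleGraph V} (hT : T.IsTree) {S S' : Set (Sym2 V)}
    (hS : IsSubtreeSet T S) (hS' : IsSubtreeSet T S')
    (hleaf : leafEdges S ⊆ S') : S ⊆ S' := by
  by_contra hcon
  have hD : (S \ S').Nonempty := Set.diff_nonempty.2 hcon
  obtain ⟨a, ha⟩ := hS'.1
  obtain ⟨v, hva⟩ := sym2_exists_mem a
  have hv : v ∈ supp S' := ⟨a, ha, hva⟩
  set g : Sym2 V → ℕ :=
    Sym2.lift ⟨fun p q => max (T.dist v p) (T.dist v q), fun p q => max_comm _ _⟩ with hg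
  have hfin : (S \ S').Finite := Set.toFinite _
  obtain ⟨e, heD, hmax⟩ := hfin.toFinset.exists_max_image g
    (by rwa [← Set.Finite.toFinset_nonempty hfin] at hD)
  rw [Set.Finite.mem_toFinset] at heD
  have hmax' : ∀ e' ∈ S \ S', g e' ≤ g e := by
    intro e' he'
    exact hmax e' (hfin.mem_toFinset.2 he')
  clear hmax
  revert heD hmax'
  induction e using Sym2.ind with
  | _ x y =>
    intro heD hmax'
    have hmax'' : ∀ w z : V, s(w, z) ∈ S \ S' →
        max (T.dist v w) (T.dist v z) ≤ max (T.dist v x) (T.dist v y) := by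
      intro w z hwz
      have := hmax' s(w, z) hwz
      simpa [hg] using this
    rcases le_total (T.dist v y) (T.dist v x) with hd | hd
    · exact no_max hT hS hS' hleaf hv heD hd hmax''
    · refine no_max hT hS hS' hleaf hv (Sym2.eq_swap ▸ heD) hd ?_
      intro w z hwz
      rw [max_comm (T.dist v y)]
      exact hmax'' w z hwz

end StmtAux

open StmtAux

/-- Let `T` be a tree, `A ⊆ E(T)` nonempty, `K = K(A)` its connector (characterized by the
minimality property), and let `S` be a subtree of `T`.  Then `A ∪ K = S` if and only if
`L(S) ⊆ A ⊆ S`, where `L(S)` is the set of leaf edges of `S`. -/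
theorem stmt_6 [Fintype V] (T : SimpleGraph V) (hT : T.IsTree)
    (A K S : Set (Sym2 V)) (hA : A ⊆ T.edgeSet) (hne : A.Nonempty)
    (hK1 : K ⊆ T.edgeSet \ A) (hK2 : IsSubtreeSet T (A ∪ K))
    (hK3 : ∀ B ⊆ T.edgeSet \ A, IsSubtreeSet T (A ∪ B) → K ⊆ B)
    (hS : IsSubtreeSet T S) :
    A ∪ K = S ↔ leafEdges S ⊆ A ∧ A ⊆ S := by
  constructor
  · rintro rfl
    refine ⟨?_, Set.subset_union_left⟩
    intro e he
    by_contra heA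
    have heK : e ∈ K := by
      rcases he.1 with h | h
      · exact absurd h heA
      · exact h
    have hAsub : A ⊆ (A ∪ K) \ {e} := fun f hf =>
      ⟨Or.inl hf, by rintro rfl; exact heA hf⟩
    have hne' : ((A ∪ K) \ {e}).Nonempty := hne.mono hAsub
    have hsub : IsSubtreeSet T ((A ∪ K) \ {e}) := subtree_erase_leaf hK2 he hne'
    have hunion : A ∪ (K \ {e}) = (A ∪ K) \ {e} := by
      ext f
      constructor
      · rintro (hf | ⟨hf, hfe⟩)
        · exact ⟨Or.inl hf, by rintro rfl; exact heA hf⟩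
        · exact ⟨Or.inr hf, hfe⟩
      · rintro ⟨hf | hf, hfe⟩
        · exact Or.inl hf
        · exact Or.inr ⟨hf, hfe⟩
    have hKsub := hK3 (K \ {e}) (fun f hf => hK1 hf.1) (by rw [hunion]; exact hsub)
    exact (hKsub heK).2 rfl
  · rintro ⟨hLA, hAS⟩
    have hKS : K ⊆ S \ A := hK3 (S \ A) (fun f hf => ⟨hS.2.1 hf.1, hf.2⟩)
      (by rw [Set.union_diff_cancel hAS]; exact hS)
    have hsub : A ∪ K ⊆ S := Set.union_subset hAS (fun f hf => (hKS hf).1)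
    refine Set.Subset.antisymm hsub (main_claim hT hS hK2 ?_)
    exact fun f hf => Or.inl (hLA hf)
end

section
/- Let T be a tree and let q, r be elements of a commutative ring. Then Σ_{S} q^{#S} r^{#L(S)} = Σ_{A} (qr)^{#A} (q(1−r))^{#K(A)}, where the left sum is over all subtrees S of T and the right sum is over all nonempty subsets A ⊆ E(T). In other words, the subtree polynomial S_T(q,r) equals the connector polynomial K_T evaluated at (qr, q(1−r)). -/
open SimpleGraph Finset

variable {V : Type*}

attribute [local instance] Classical.propDecidable

section Aux

/-- The subgraph of `T` with edge set `S` (when `S ⊆ T.edgeSet`). -/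
def toSub (T : SimpleGraph V) (S : Set (Sym2 V)) : T.Subgraph where
  verts := {v | ∃ e ∈ S, v ∈ e}
  Adj u v := s(u, v) ∈ S ∧ T.Adj u v
  adj_sub h := h.2
  edge_vert h := ⟨s(_, _), h.1, Sym2.mem_mk_left _ _⟩
  symm := ⟨fun u v h => ⟨Sym2.eq_swap ▸ h.1, h.2.symm⟩⟩

lemma toSub_verts (T : SimpleGraph V) (S : Set (Sym2 V)) :
    (toSub T S).verts = {v | ∃ e ∈ S, v ∈ e} := rfl

lemma mem_toSub_edgeSet {T : SimpleGraph V} {S : Set (Sym2 V)} (hS : S ⊆ T.edgeSet)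
    {e : Sym2 V} : e ∈ (toSub T S).edgeSet ↔ e ∈ S := by
  induction e
  rw [SimpleGraph.Subgraph.mem_edgeSet]
  exact ⟨fun h => h.1, fun h => ⟨h, hS h⟩⟩

lemma coe_toSub_eq {T : SimpleGraph V} {S : Set (Sym2 V)} (hS : S ⊆ T.edgeSet) :
    (toSub T S).coe = (SimpleGraph.fromEdgeSet S).induce {v | ∃ e ∈ S, v ∈ e} := by
  ext ⟨u, hu⟩ ⟨v, hv⟩
  simp only [SimpleGraph.Subgraph.coe_adj, SimpleGraph.comap_adj, Function.Embedding.coe_subtype,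
    SimpleGraph.fromEdgeSet_adj]
  exact ⟨fun h => ⟨h.1, h.2.ne⟩, fun h => ⟨h.1, by
    have := hS h.1; rwa [SimpleGraph.mem_edgeSet] at this⟩⟩

lemma isSubtreeSet_iff' {T : SimpleGraph V} {S : Set (Sym2 V)} :
    IsSubtreeSet T S ↔ S.Nonempty ∧ S ⊆ T.edgeSet ∧ (toSub T S).Connected := by
  constructor
  · rintro ⟨h1, h2, h3⟩
    exact ⟨h1, h2, by rw [SimpleGraph.Subgraph.connected_iff', coe_toSub_eq h2]; exact h3⟩
  · rintro ⟨h1, h2, h3⟩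
    refine ⟨h1, h2, ?_⟩
    rw [SimpleGraph.Subgraph.connected_iff', coe_toSub_eq h2] at h3
    exact h3

variable {T : SimpleGraph V}

noncomputable def tpath (hT : T.IsTree) (u v : V) : T.Walk u v :=
  (hT.existsUnique_path u v).choose

lemma tpath_isPath (hT : T.IsTree) (u v : V) : (tpath hT u v).IsPath :=
  (hT.existsUnique_path u v).choose_spec.1

lemma tpath_eq (hT : T.IsTree) {u v : V} {p : T.Walk u v} (hp : p.IsPath) :
    p = tpath hT u v :=
  (hT.existsUnique_path u v).unique hp (tpath_isPath hT u v)

lemma tpath_self (hT : T.IsTree) (u : V) : tpath hT u u = SimpleGraph.Walk.nil :=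
  (tpath_eq hT SimpleGraph.Walk.IsPath.nil).symm

lemma edges_subset_of_connected (hT : T.IsTree) {S : Set (Sym2 V)}
    (hC : (toSub T S).Connected) {u v : V}
    (hu : u ∈ (toSub T S).verts) (hv : v ∈ (toSub T S).verts) :
    ∀ e ∈ (tpath hT u v).edges, e ∈ S := by
  obtain ⟨w⟩ := hC.coe ⟨u, hu⟩ ⟨v, hv⟩
  set w' : T.Walk u v := w.map (toSub T S).hom with hw'
  have hedges : ∀ e ∈ w'.edges, e ∈ S := by
    intro e he
    replace he : e ∈ (w.map (toSub T S).hom).edges := he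
    rw [SimpleGraph.Walk.edges_map, List.mem_map] at he
    obtain ⟨e', he', rfl⟩ := he
    have := SimpleGraph.Walk.edges_subset_edgeSet w he'
    rw [SimpleGraph.Subgraph.edgeSet_coe] at this
    have h2 : Sym2.map Subtype.val e' ∈ (toSub T S).edgeSet := this
    induction e' with
    | _ x y => exact (SimpleGraph.Subgraph.mem_edgeSet.mp h2).1
  have hbp : w'.bypass = tpath hT u v := tpath_eq hT w'.bypass_isPath
  intro e he
  rw [← hbp] at he
  exact hedges e (SimpleGraph.Walk.edges_bypass_subset w' he)

/-- helper: concat a path with a new vertex is a path -/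
lemma concat_isPath {u x y : V} {p : T.Walk u x} (hp : p.IsPath) (h : T.Adj x y)
    (hy : y ∉ p.support) : (p.concat h).IsPath := by
  have : (p.concat h).reverse.IsPath := by
    rw [SimpleGraph.Walk.reverse_concat]
    rw [SimpleGraph.Walk.cons_isPath_iff]
    exact ⟨hp.reverse, by rwa [SimpleGraph.Walk.support_reverse, List.mem_reverse]⟩
  have := this.reverse; rwa [SimpleGraph.Walk.reverse_reverse] at this

lemma mem_edge_of_mem_support {u v w : V} (p : T.Walk u v) (hw : w ∈ p.support) :
    w = u ∨ ∃ e ∈ p.edges, w ∈ e := by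
  induction p with
  | nil => left; simpa using hw
  | @cons a b c h p ih =>
    rw [SimpleGraph.Walk.support_cons, List.mem_cons] at hw
    rcases hw with rfl | hw
    · left; rfl
    · right
      rcases ih hw with rfl | ⟨e, he, hwe⟩
      · exact ⟨s(a, w), by simp, Sym2.mem_mk_right _ _⟩
      · exact ⟨e, by simp [he], hwe⟩

/-- Union of the (unique) paths from `a` to all vertices in `W`. -/
noncomputable def pathsSub (hT : T.IsTree) (a : V) (W : Finset V) : T.Subgraph :=
  W.sup (fun v => (tpath hT a v).toSubgraph)

lemma mem_verts_pathsSub {hT : T.IsTree} {a : V} {W : Finset V} {w : V} :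
    w ∈ (pathsSub hT a W).verts ↔ ∃ v ∈ W, w ∈ (tpath hT a v).support := by
  classical
  induction W using Finset.cons_induction with
  | empty => simp [pathsSub]
  | cons v s hv ih =>
    simp only [pathsSub] at ih ⊢
    rw [Finset.sup_cons, SimpleGraph.Subgraph.verts_sup]
    simp only [Set.mem_union, SimpleGraph.Walk.mem_verts_toSubgraph, ih, Finset.mem_cons,
      or_and_right, exists_or, exists_eq_left]

lemma mem_edgeSet_pathsSub {hT : T.IsTree} {a : V} {W : Finset V} {e : Sym2 V} :
    e ∈ (pathsSub hT a W).edgeSet ↔ ∃ v ∈ W, e ∈ (tpath hT a v).edges := by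
  classical
  induction W using Finset.cons_induction with
  | empty => simp [pathsSub]
  | cons v s hv ih =>
    simp only [pathsSub] at ih ⊢
    rw [Finset.sup_cons, SimpleGraph.Subgraph.edgeSet_sup]
    have : e ∈ (tpath hT a v).toSubgraph.edgeSet ↔ e ∈ (tpath hT a v).edges := by
      rw [SimpleGraph.Walk.edgeSet_toSubgraph]; rfl
    simp only [Set.mem_union, this, ih, Finset.mem_cons, or_and_right, exists_or, exists_eq_left]

lemma start_mem_verts_pathsSub {hT : T.IsTree} {a : V} {W : Finset V} (hW : W.Nonempty) :
    a ∈ (pathsSub hT a W).verts := by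
  obtain ⟨v, hv⟩ := hW
  exact mem_verts_pathsSub.mpr ⟨v, hv, (tpath hT a v).start_mem_support⟩

lemma pathsSub_connected (hT : T.IsTree) (a : V) {W : Finset V} (hW : W.Nonempty) :
    (pathsSub hT a W).Connected := by
  classical
  induction W using Finset.cons_induction with
  | empty => exact absurd hW (by simp)
  | cons v s hv ih =>
    rcases s.eq_empty_or_nonempty with rfl | hs
    · simpa [pathsSub] using (tpath hT a v).toSubgraph_connected
    · have h1 : (pathsSub hT a ({v} : Finset V)).Connected := by
        simpa [pathsSub] using (tpath hT a v).toSubgraph_connected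
      have h2 := ih hs
      have : (pathsSub hT a (Finset.cons v s hv)) =
          (tpath hT a v).toSubgraph ⊔ pathsSub hT a s := by
        simp [pathsSub, Finset.sup_cons]
      rw [this]
      refine SimpleGraph.Subgraph.connected_sup ?_ h2.preconnected ?_
      · exact (tpath hT a v).toSubgraph_connected.preconnected
      · exact ⟨a, by
          simp only [SimpleGraph.Subgraph.verts_inf, Set.mem_inter_iff]
          exact ⟨(tpath hT a v).start_mem_verts_toSubgraph, start_mem_verts_pathsSub hs⟩⟩

lemma adj_mem_tpath (hT : T.IsTree) {x y : V} (a : V) (hxy : T.Adj x y) :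
    s(x, y) ∈ (tpath hT a x).edges ∨ s(x, y) ∈ (tpath hT a y).edges := by
  by_cases h : y ∈ (tpath hT a x).support
  · left
    have hq : ((tpath hT a x).dropUntil y h).IsPath := (tpath_isPath hT a x).dropUntil h
    have hsingle : (SimpleGraph.Walk.cons hxy.symm SimpleGraph.Walk.nil).IsPath := by
      rw [SimpleGraph.Walk.cons_isPath_iff]
      exact ⟨SimpleGraph.Walk.IsPath.nil, by simpa using (hxy.symm.ne)⟩
    have : (tpath hT a x).dropUntil y h = SimpleGraph.Walk.cons hxy.symm SimpleGraph.Walk.nil :=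
      (tpath_eq hT hq).trans (tpath_eq hT hsingle).symm
    have hmem : s(y, x) ∈ ((tpath hT a x).dropUntil y h).edges := by
      rw [this]; simp
    rw [Sym2.eq_swap]
    exact SimpleGraph.Walk.edges_dropUntil_subset _ h hmem
  · right
    have hq : ((tpath hT a x).concat hxy).IsPath := concat_isPath (tpath_isPath hT a x) hxy h
    have : (tpath hT a x).concat hxy = tpath hT a y := tpath_eq hT hq
    rw [← this, SimpleGraph.Walk.edges_concat]
    simp

variable [Fintype V]

noncomputable def Averts (A : Finset (Sym2 V)) : Finset V :=
  Finset.univ.filter (fun v => ∃ e ∈ A, v ∈ e)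

lemma mem_Averts {A : Finset (Sym2 V)} {v : V} : v ∈ Averts A ↔ ∃ e ∈ A, v ∈ e := by
  simp [Averts]

lemma Averts_nonempty {A : Finset (Sym2 V)} (hA : A.Nonempty) : (Averts A).Nonempty := by
  obtain ⟨e, he⟩ := hA
  induction e with
  | _ x y => exact ⟨x, mem_Averts.mpr ⟨s(x, y), he, Sym2.mem_mk_left _ _⟩⟩

noncomputable def clF (hT : T.IsTree) (A : Finset (Sym2 V)) : Finset (Sym2 V) :=
  if h : (Averts A).Nonempty then
    Set.Finite.toFinset (Set.toFinite (pathsSub hT h.choose (Averts A)).edgeSet)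
  else ∅

lemma mem_clF {hT : T.IsTree} {A : Finset (Sym2 V)} (hv : (Averts A).Nonempty) {e : Sym2 V} :
    e ∈ clF hT A ↔ ∃ w ∈ Averts A, e ∈ (tpath hT hv.choose w).edges := by
  rw [clF, dif_pos hv]
  rw [Set.Finite.mem_toFinset]
  exact mem_edgeSet_pathsSub

lemma clF_subset_edgeSet {hT : T.IsTree} {A : Finset (Sym2 V)} :
    ↑(clF hT A) ⊆ T.edgeSet := by
  intro e he
  by_cases hv : (Averts A).Nonempty
  · obtain ⟨w, _, hw⟩ := (mem_clF hv).mp he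
    exact SimpleGraph.Walk.edges_subset_edgeSet _ hw
  · rw [clF, dif_neg hv] at he; simp at he

lemma subset_clF {hT : T.IsTree} {A : Finset (Sym2 V)} (hAE : ↑A ⊆ T.edgeSet) :
    A ⊆ clF hT A := by
  intro e he
  have hv : (Averts A).Nonempty := Averts_nonempty ⟨e, he⟩
  rw [mem_clF hv]
  induction e with
  | _ x y =>
    have hadj : T.Adj x y := by
      have := hAE (by exact_mod_cast he); rwa [SimpleGraph.mem_edgeSet] at this
    have hx : x ∈ Averts A := mem_Averts.mpr ⟨s(x, y), he, Sym2.mem_mk_left _ _⟩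
    have hy : y ∈ Averts A := mem_Averts.mpr ⟨s(x, y), he, Sym2.mem_mk_right _ _⟩
    rcases adj_mem_tpath hT hv.choose hadj with h | h
    · exact ⟨x, hx, h⟩
    · exact ⟨y, hy, h⟩

lemma mem_support_of_mem_edges' {u v w : V} (p : T.Walk u v) {e : Sym2 V}
    (he : e ∈ p.edges) (hw : w ∈ e) : w ∈ p.support := by
  induction e with
  | _ x y =>
    rcases Sym2.mem_iff.mp hw with rfl | rfl
    · exact p.fst_mem_support_of_mem_edges he
    · exact p.snd_mem_support_of_mem_edges he

lemma toSub_clF_eq {hT : T.IsTree} {A : Finset (Sym2 V)} (hA : A.Nonempty)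
    (hAE : ↑A ⊆ T.edgeSet) :
    toSub T ↑(clF hT A) = pathsSub hT (Averts_nonempty hA).choose (Averts A) := by
  have hv : (Averts A).Nonempty := Averts_nonempty hA
  set a := hv.choose with ha
  have haA : a ∈ Averts A := hv.choose_spec
  have hedge : ∀ e, e ∈ (toSub T ↑(clF hT A)).edgeSet ↔
      e ∈ (pathsSub hT a (Averts A)).edgeSet := by
    intro e
    rw [mem_toSub_edgeSet clF_subset_edgeSet, mem_edgeSet_pathsSub]
    exact_mod_cast mem_clF hv
  apply SimpleGraph.Subgraph.ext
  · -- verts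
    ext w
    simp only [toSub_verts, Set.mem_setOf_eq]
    constructor
    · rintro ⟨e, he, hwe⟩
      obtain ⟨u, hu, heu⟩ := (mem_clF hv).mp (by exact_mod_cast he)
      rw [mem_verts_pathsSub]
      exact ⟨u, hu, mem_support_of_mem_edges' _ heu hwe⟩
    · intro hw
      rw [mem_verts_pathsSub] at hw
      obtain ⟨u, hu, hwsup⟩ := hw
      rcases mem_edge_of_mem_support _ hwsup with rfl | ⟨e, he, hwe⟩
      · obtain ⟨e, he, hae⟩ := mem_Averts.mp haA
        exact ⟨e, by exact_mod_cast subset_clF hAE he, hae⟩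
      · exact ⟨e, by exact_mod_cast (mem_clF hv).mpr ⟨u, hu, he⟩, hwe⟩
  · -- adj
    funext x y
    have := hedge s(x, y)
    rw [SimpleGraph.Subgraph.mem_edgeSet, SimpleGraph.Subgraph.mem_edgeSet] at this
    simp only [eq_iff_iff]
    exact this

lemma isSubtreeSet_clF {hT : T.IsTree} {A : Finset (Sym2 V)} (hA : A.Nonempty)
    (hAE : ↑A ⊆ T.edgeSet) : IsSubtreeSet T ↑(clF hT A) := by
  rw [isSubtreeSet_iff']
  refine ⟨?_, clF_subset_edgeSet, ?_⟩
  · obtain ⟨e, he⟩ := hA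
    exact ⟨e, by exact_mod_cast subset_clF hAE he⟩
  · rw [toSub_clF_eq hA hAE]
    exact pathsSub_connected hT _ (Averts_nonempty hA)

lemma clF_min {hT : T.IsTree} {A : Finset (Sym2 V)} (hA : A.Nonempty) {S' : Set (Sym2 V)}
    (hS' : IsSubtreeSet T S') (hAS : ↑A ⊆ S') : ↑(clF hT A) ⊆ S' := by
  have hv : (Averts A).Nonempty := Averts_nonempty hA
  obtain ⟨hne, hSE, hconn⟩ := isSubtreeSet_iff'.mp hS'
  intro e he
  obtain ⟨u, hu, heu⟩ := (mem_clF hv).mp (by exact_mod_cast he)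
  have hverts : ∀ w ∈ Averts A, w ∈ (toSub T S').verts := by
    intro w hw
    obtain ⟨e', he', hwe'⟩ := mem_Averts.mp hw
    exact ⟨e', hAS he', hwe'⟩
  exact edges_subset_of_connected hT hconn (hverts _ hv.choose_spec) (hverts u hu) e heu

lemma connector_eq {hT : T.IsTree} {A : Finset (Sym2 V)} (hA : A.Nonempty)
    (hAE : ↑A ⊆ T.edgeSet) : connector T ↑A = ↑(clF hT A) \ (↑A : Set (Sym2 V)) := by
  have hmem : (↑(clF hT A) \ (↑A : Set (Sym2 V))) ∈
      {B | B ⊆ T.edgeSet \ ↑A ∧ IsSubtreeSet T (↑A ∪ B)} := by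
    constructor
    · intro e he
      exact ⟨clF_subset_edgeSet he.1, he.2⟩
    · have : (↑A ∪ (↑(clF hT A) \ (↑A : Set (Sym2 V)))) = (↑(clF hT A) : Set (Sym2 V)) := by
        rw [Set.union_diff_self, Set.union_eq_self_of_subset_left]
        exact_mod_cast subset_clF hAE
      rw [this]
      exact isSubtreeSet_clF hA hAE
  apply Set.eq_of_subset_of_subset
  · exact Set.sInter_subset_of_mem hmem
  · intro e he
    rw [connector, Set.mem_sInter]
    rintro B ⟨hB1, hB2⟩
    have hcl : ↑(clF hT A) ⊆ ↑A ∪ B := clF_min hA hB2 Set.subset_union_left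
    rcases hcl he.1 with h | h
    · exact absurd h he.2
    · exact h

/-- If a path from `x` contains an edge incident to `x`, that edge is its first edge. -/
lemma firstEdge {x u y : V} (p : T.Walk x u) (hp : p.IsPath) (he : s(x, y) ∈ p.edges) :
    ∃ (h : T.Adj x y) (q : T.Walk y u), p = SimpleGraph.Walk.cons h q ∧
      s(x, y) ∉ q.edges ∧ x ∉ q.support := by
  cases p with
  | nil => simp at he
  | @cons _ b _ h' q' =>
    have hx : x ∉ q'.support := ((SimpleGraph.Walk.cons_isPath_iff _ _).mp hp).2
    rw [SimpleGraph.Walk.edges_cons, List.mem_cons] at he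
    rcases he with he | he
    · obtain rfl : y = b := Sym2.congr_right.mp he
      exact ⟨h', q', rfl, fun hc => hx (mem_support_of_mem_edges' q' hc (Sym2.mem_mk_left _ _)),
        hx⟩
    · exact absurd (mem_support_of_mem_edges' q' he (Sym2.mem_mk_left _ _)) hx

/-- transitivity of edge-avoidance of tree paths -/
lemma tpath_avoid_trans (hT : T.IsTree) {w z z' : V} {e : Sym2 V}
    (h1 : e ∉ (tpath hT w z).edges) (h2 : e ∉ (tpath hT z z').edges) :
    e ∉ (tpath hT w z').edges := by
  have hbp : ((tpath hT w z).append (tpath hT z z')).bypass = tpath hT w z' :=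
    tpath_eq hT (SimpleGraph.Walk.bypass_isPath _)
  intro hmem
  rw [← hbp] at hmem
  have := SimpleGraph.Walk.edges_bypass_subset _ hmem
  rw [SimpleGraph.Walk.edges_append, List.mem_append] at this
  tauto

lemma tpath_reverse (hT : T.IsTree) (u v : V) : (tpath hT u v).reverse = tpath hT v u :=
  tpath_eq hT (tpath_isPath hT u v).reverse

lemma exists_leaf_side (hT : T.IsTree) {S : Finset (Sym2 V)} (hS : IsSubtreeSet T ↑S)
    {x y : V} (he : s(x, y) ∈ S) :
    ∃ u f, f ∈ S ∧ u ∈ f ∧ (∀ e' ∈ S, u ∈ e' → e' = f) ∧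
      s(x, y) ∈ (tpath hT x u).edges := by
  obtain ⟨hne, hSE, hconn⟩ := isSubtreeSet_iff'.mp hS
  have hadjxy : T.Adj x y := by
    have := hSE (show s(x, y) ∈ (↑S : Set (Sym2 V)) from he)
    rwa [SimpleGraph.mem_edgeSet] at this
  have hyC : y ∈ (Averts S).filter (fun w => s(x, y) ∈ (tpath hT x w).edges) := by
    have h1 : (SimpleGraph.Walk.cons hadjxy SimpleGraph.Walk.nil).IsPath := by
      rw [SimpleGraph.Walk.cons_isPath_iff _ _]
      exact ⟨SimpleGraph.Walk.IsPath.nil, by simpa using hadjxy.ne⟩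
    have h2 : tpath hT x y = SimpleGraph.Walk.cons hadjxy SimpleGraph.Walk.nil :=
      (tpath_eq hT h1).symm
    rw [Finset.mem_filter]
    exact ⟨mem_Averts.mpr ⟨s(x, y), he, Sym2.mem_mk_right _ _⟩, by rw [h2]; simp⟩
  obtain ⟨u, huC, hmax⟩ := Finset.exists_max_image _ (fun w => (tpath hT x w).length) ⟨y, hyC⟩
  rw [Finset.mem_filter] at huC
  obtain ⟨huA, hpe⟩ := huC
  set p := tpath hT x u with hp
  have hvert : ∀ w ∈ Averts S, w ∈ (toSub T (↑S : Set (Sym2 V))).verts := by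
    intro w hw; obtain ⟨e', h1, h2⟩ := mem_Averts.mp hw; exact ⟨e', h1, h2⟩
  have hxA : x ∈ Averts S := mem_Averts.mpr ⟨s(x, y), he, Sym2.mem_mk_left _ _⟩
  have hps : ∀ e' ∈ p.edges, e' ∈ (↑S : Set (Sym2 V)) :=
    edges_subset_of_connected hT hconn (hvert x hxA) (hvert u huA)
  have hprp : p.reverse.IsPath := (tpath_isPath hT x u).reverse
  have hne' : s(x, y) ∈ p.reverse.edges := by
    rwa [SimpleGraph.Walk.edges_reverse, List.mem_reverse]
  obtain ⟨w, hadjuw, q, hdecomp, husup⟩ :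
      ∃ w, ∃ (h : T.Adj u w), ∃ (q : T.Walk w x), p.reverse = SimpleGraph.Walk.cons h q ∧
        u ∉ q.support := by
    cases hrev : p.reverse with
    | nil => rw [hrev] at hne'; simp at hne'
    | cons h' q' =>
      exact ⟨_, h', q', rfl, ((SimpleGraph.Walk.cons_isPath_iff _ _).mp (hrev ▸ hprp)).2⟩
  have hfS : s(u, w) ∈ S := by
    have : s(u, w) ∈ p.reverse.edges := by rw [hdecomp]; simp
    rw [SimpleGraph.Walk.edges_reverse, List.mem_reverse] at this
    exact_mod_cast hps _ this
  refine ⟨u, s(u, w), hfS, Sym2.mem_mk_left _ _, ?_, hpe⟩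
  intro e' he' hue'
  have hz : s(u, Sym2.Mem.other' hue') = e' := Sym2.other_spec' hue'
  set z := Sym2.Mem.other' hue' with hzdef
  have hadjuz : T.Adj u z := by
    have := hSE (show e' ∈ (↑S : Set (Sym2 V)) from he')
    rw [← hz, SimpleGraph.mem_edgeSet] at this
    exact this
  by_cases hzs : z ∈ p.support
  · have hz2 : z ∈ p.reverse.support := by
      rwa [SimpleGraph.Walk.support_reverse, List.mem_reverse]
    have htk : (p.reverse.takeUntil z hz2).IsPath := hprp.takeUntil hz2
    have hsingle : (SimpleGraph.Walk.cons hadjuz SimpleGraph.Walk.nil).IsPath := by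
      rw [SimpleGraph.Walk.cons_isPath_iff _ _]
      exact ⟨SimpleGraph.Walk.IsPath.nil, by simpa using hadjuz.ne⟩
    have heq2 : p.reverse.takeUntil z hz2 = SimpleGraph.Walk.cons hadjuz SimpleGraph.Walk.nil :=
      (tpath_eq hT htk).trans (tpath_eq hT hsingle).symm
    have hmem : s(u, z) ∈ p.reverse.edges :=
      SimpleGraph.Walk.edges_takeUntil_subset _ hz2 (by rw [heq2]; simp)
    obtain ⟨h1, q2, hdec2, _, _⟩ := firstEdge p.reverse hprp hmem
    have hheads : s(u, w) = s(u, z) := by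
      have e1 : p.reverse.edges = s(u, w) :: q.edges := by rw [hdecomp]; simp
      have e2 : p.reverse.edges = s(u, z) :: q2.edges := by rw [hdec2]; simp
      rw [e1] at e2
      exact (List.cons_eq_cons.mp e2).1
    rw [← hz, ← hheads]
  · exfalso
    have hcp : (p.concat hadjuz).IsPath := concat_isPath (tpath_isPath hT x u) hadjuz hzs
    have heq : p.concat hadjuz = tpath hT x z := tpath_eq hT hcp
    have hzC : z ∈ (Averts S).filter (fun w => s(x, y) ∈ (tpath hT x w).edges) := by
      rw [Finset.mem_filter]
      refine ⟨mem_Averts.mpr ⟨e', he', by rw [← hz]; exact Sym2.mem_mk_right _ _⟩, ?_⟩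
      rw [← heq, SimpleGraph.Walk.edges_concat, List.concat_eq_append]
      exact List.mem_append.mpr (Or.inl hpe)
    have h9 := hmax z hzC
    rw [← heq, SimpleGraph.Walk.length_concat] at h9
    omega

lemma leafEdges_sub {S : Finset (Sym2 V)} {f : Sym2 V} {u : V} (hfS : f ∈ S) (huf : u ∈ f)
    (hleaf : ∀ e' ∈ S, u ∈ e' → e' = f) : f ∈ leafEdges (↑S : Set (Sym2 V)) :=
  ⟨hfS, u, huf, fun e' he' hue' => hleaf e' (by exact_mod_cast he') hue'⟩

lemma subtree_subset_clF (hT : T.IsTree) {S A : Finset (Sym2 V)} (hS : IsSubtreeSet T ↑S)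
    (hL : leafEdges (↑S : Set (Sym2 V)) ⊆ ↑A) (hAS : A ⊆ S) : S ⊆ clF hT A := by
  have hSE : (↑S : Set (Sym2 V)) ⊆ T.edgeSet := hS.2.1
  have hAE : (↑A : Set (Sym2 V)) ⊆ T.edgeSet := fun e h => hSE (by exact_mod_cast hAS (by exact_mod_cast h))
  intro e heS
  induction e with
  | _ x y =>
    obtain ⟨u, f, hfS, huf, hleaf, hpe⟩ := exists_leaf_side hT hS heS
    have heS' : s(y, x) ∈ S := by rwa [Sym2.eq_swap]
    obtain ⟨v, g, hgS, hvg, hleaf2, hpe2⟩ := exists_leaf_side hT hS heS'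
    have hfA : f ∈ A := by exact_mod_cast hL (leafEdges_sub hfS huf hleaf)
    have hgA : g ∈ A := by exact_mod_cast hL (leafEdges_sub hgS hvg hleaf2)
    have hAne : A.Nonempty := ⟨f, hfA⟩
    obtain ⟨h1, q1, hd1, hq1e, _⟩ := firstEdge (tpath hT x u) (tpath_isPath hT x u) hpe
    have hq1 : q1 = tpath hT y u :=
      tpath_eq hT ((SimpleGraph.Walk.cons_isPath_iff _ _).mp (hd1 ▸ tpath_isPath hT x u)).1
    have hkey : s(x, y) ∈ (tpath hT u v).edges := by
      by_contra hno
      have b1 : s(x, y) ∉ (tpath hT y u).edges := hq1 ▸ hq1e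
      have b2 := tpath_avoid_trans hT b1 hno
      apply b2
      rwa [Sym2.eq_swap] at hpe2
    have hsub : IsSubtreeSet T ↑(clF hT A) := isSubtreeSet_clF hAne hAE
    have hconn := (isSubtreeSet_iff'.mp hsub).2.2
    have hu : u ∈ (toSub T (↑(clF hT A) : Set (Sym2 V))).verts :=
      ⟨f, by exact_mod_cast subset_clF hAE hfA, huf⟩
    have hv : v ∈ (toSub T (↑(clF hT A) : Set (Sym2 V))).verts :=
      ⟨g, by exact_mod_cast subset_clF hAE hgA, hvg⟩
    exact_mod_cast edges_subset_of_connected hT hconn hu hv _ hkey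

lemma erase_leaf_subtree (hT : T.IsTree) {S : Finset (Sym2 V)} (hS : IsSubtreeSet T ↑S)
    {f : Sym2 V} (hf : f ∈ leafEdges (↑S : Set (Sym2 V))) (hne : (S.erase f).Nonempty) :
    IsSubtreeSet T ↑(S.erase f) := by
  obtain ⟨hfS, z, hzf, hzonly⟩ := hf
  have hS'S : S.erase f ⊆ S := Finset.erase_subset f S
  have hS'E : (↑(S.erase f) : Set (Sym2 V)) ⊆ T.edgeSet := fun e he =>
    hS.2.1 (by exact_mod_cast hS'S (by exact_mod_cast he))
  have hzonly' : ∀ e' ∈ S, z ∈ e' → e' = f := fun e' he' hz => hzonly e' (by exact_mod_cast he') hz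
  have hzA : z ∉ Averts (S.erase f) := by
    intro hz
    obtain ⟨e', he', hze'⟩ := mem_Averts.mp hz
    exact Finset.ne_of_mem_erase he' (hzonly' e' (hS'S he') hze')
  have hconnS := (isSubtreeSet_iff'.mp hS).2.2
  have hvertS : ∀ w ∈ Averts (S.erase f), w ∈ (toSub T (↑S : Set (Sym2 V))).verts := by
    intro w hw
    obtain ⟨e', he', hwe'⟩ := mem_Averts.mp hw
    exact ⟨e', by exact_mod_cast hS'S he', hwe'⟩
  have hpaths : ∀ a w, a ∈ Averts (S.erase f) → w ∈ Averts (S.erase f) →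
      ∀ e ∈ (tpath hT a w).edges, e ∈ S.erase f := by
    intro a w ha hb e he
    have hpS : ∀ e' ∈ (tpath hT a w).edges, e' ∈ (↑S : Set (Sym2 V)) :=
      edges_subset_of_connected hT hconnS (hvertS a ha) (hvertS w hb)
    have heS : e ∈ S := by exact_mod_cast hpS e he
    rw [Finset.mem_erase]
    refine ⟨?_, heS⟩
    rintro rfl
    -- the edge e (a leaf edge) is on the path from a to w : contradiction
    set p := tpath hT a w with hp
    have hzp : z ∈ p.support := mem_support_of_mem_edges' p he hzf
    have hnd : p.edges.Nodup := (tpath_isPath hT a w).isTrail.edges_nodup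
    have hsplit : (p.takeUntil z hzp).append (p.dropUntil z hzp) = p :=
      SimpleGraph.Walk.take_spec p hzp
    have hndsplit : ((p.takeUntil z hzp).edges ++ (p.dropUntil z hzp).edges).Nodup := by
      rw [← SimpleGraph.Walk.edges_append, hsplit]; exact hnd
    have hdisj := List.disjoint_of_nodup_append hndsplit
    have hfd : e ∈ (p.takeUntil z hzp).edges ++ (p.dropUntil z hzp).edges := by
      rw [← SimpleGraph.Walk.edges_append, hsplit]; exact he
    rcases List.mem_append.mp hfd with hf1 | hf2
    · -- e in the first part: look at first edge of dropUntil
      cases hr : p.dropUntil z hzp with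
      | nil => exact hzA hb
      | @cons _ b _ h' q' =>
        have he2 : s(z, b) ∈ (p.dropUntil z hzp).edges := by rw [hr]; simp
        have he2S : s(z, b) ∈ S := by
          exact_mod_cast hpS _ (SimpleGraph.Walk.edges_dropUntil_subset p hzp he2)
        have heq9 : s(z, b) = e := hzonly' _ he2S (Sym2.mem_mk_left _ _)
        exact (hdisj hf1 (heq9 ▸ he2))
    · -- e in the second part: look at last edge of takeUntil
      cases hr : (p.takeUntil z hzp).reverse with
      | nil => exact hzA ha
      | @cons _ b _ h' q' =>
        have he1 : s(z, b) ∈ (p.takeUntil z hzp).reverse.edges := by rw [hr]; simp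
        rw [SimpleGraph.Walk.edges_reverse, List.mem_reverse] at he1
        have he1S : s(z, b) ∈ S := by
          exact_mod_cast hpS _ (SimpleGraph.Walk.edges_takeUntil_subset p hzp he1)
        have heq9 : s(z, b) = e := hzonly' _ he1S (Sym2.mem_mk_left _ _)
        exact (hdisj (heq9 ▸ he1) hf2)
  have hne2 : (S.erase f).Nonempty := hne
  have hsub := isSubtreeSet_clF (hT := hT) hne2 hS'E
  have hcl : clF hT (S.erase f) = S.erase f := by
    apply Finset.Subset.antisymm
    · intro e he
      obtain ⟨wv, hw, hew⟩ := (mem_clF (Averts_nonempty hne2)).mp he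
      exact hpaths _ _ (Averts_nonempty hne2).choose_spec hw e hew
    · exact subset_clF hS'E
  rw [← hcl]
  exact hsub

lemma leafEdges_nonempty' (hT : T.IsTree) {S : Finset (Sym2 V)} (hS : IsSubtreeSet T ↑S) :
    (leafEdges (↑S : Set (Sym2 V))).Nonempty := by
  obtain ⟨e, he⟩ := hS.1
  have he' : e ∈ S := by exact_mod_cast he
  induction e with
  | _ x y =>
    obtain ⟨u, f, hfS, huf, hleaf, _⟩ := exists_leaf_side hT hS he'
    exact ⟨f, leafEdges_sub hfS huf hleaf⟩

lemma clF_eq_iff (hT : T.IsTree) {S A : Finset (Sym2 V)} (hS : IsSubtreeSet T ↑S)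
    (hA : A.Nonempty) (hAE : (↑A : Set (Sym2 V)) ⊆ T.edgeSet) :
    clF hT A = S ↔ leafEdges (↑S : Set (Sym2 V)) ⊆ ↑A ∧ A ⊆ S := by
  constructor
  · rintro rfl
    refine ⟨?_, subset_clF hAE⟩
    intro f hfL
    by_contra hfA
    have hfS : f ∈ clF hT A := by exact_mod_cast hfL.1
    have hAsub : A ⊆ (clF hT A).erase f := by
      intro e he
      refine Finset.mem_erase.mpr ⟨?_, subset_clF hAE he⟩
      rintro rfl
      exact hfA (by exact_mod_cast he)
    have hneS : ((clF hT A).erase f).Nonempty := by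
      obtain ⟨e0, he0⟩ := hA
      exact ⟨e0, hAsub he0⟩
    have hsub' := erase_leaf_subtree hT (isSubtreeSet_clF hA hAE) hfL hneS
    have hmin := clF_min (hT := hT) hA hsub' (by exact_mod_cast hAsub)
    have : f ∈ (clF hT A).erase f := by exact_mod_cast hmin (by exact_mod_cast hfS)
    exact (Finset.mem_erase.mp this).1 rfl
  · rintro ⟨hL, hAS⟩
    apply Finset.Subset.antisymm
    · have := clF_min (hT := hT) hA hS (by exact_mod_cast hAS)
      exact_mod_cast this
    · exact subtree_subset_clF hT hS hL hAS


end Aux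

open Classical in
/-- Let `T` be a tree and `q, r` elements of a commutative ring.  Then
`Σ_S q^{#S} r^{#L(S)} = Σ_A (qr)^{#A} (q(1−r))^{#K(A)}`, where the left-hand sum is over all
subtrees `S` of `T` and the right-hand sum is over all nonempty subsets `A ⊆ E(T)`; that is,
`S_T(q,r) = K_T(qr, q(1−r))`. -/
theorem stmt_7 [Fintype V] (T : SimpleGraph V) (hT : T.IsTree)
    {R : Type*} [CommRing R] (q r : R) :
    (∑ S ∈ (Finset.univ : Finset (Sym2 V)).powerset.filter
        (fun (S : Finset (Sym2 V)) => IsSubtreeSet T (↑S : Set (Sym2 V))),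
      q ^ S.card * r ^ (leafEdges (↑S : Set (Sym2 V))).ncard) =
    ∑ A ∈ (Finset.univ : Finset (Sym2 V)).powerset.filter
        (fun (A : Finset (Sym2 V)) => A.Nonempty ∧ (↑A : Set (Sym2 V)) ⊆ T.edgeSet),
      (q * r) ^ A.card * (q * (1 - r)) ^ (connector T (↑A : Set (Sym2 V))).ncard := by
  classical
  have hmap : ∀ A ∈ (Finset.univ : Finset (Sym2 V)).powerset.filter
      (fun A : Finset (Sym2 V) => A.Nonempty ∧ (↑A : Set (Sym2 V)) ⊆ T.edgeSet),
      clF hT A ∈ (Finset.univ : Finset (Sym2 V)).powerset.filter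
        (fun S : Finset (Sym2 V) => IsSubtreeSet T (↑S : Set (Sym2 V))) := by
    intro A hA
    rw [Finset.mem_filter] at hA ⊢
    exact ⟨Finset.mem_powerset.mpr (Finset.subset_univ _), isSubtreeSet_clF hA.2.1 hA.2.2⟩
  rw [← Finset.sum_fiberwise_of_maps_to hmap
    (fun A : Finset (Sym2 V) => (q * r) ^ A.card * (q * (1 - r)) ^ (connector T (↑A : Set (Sym2 V))).ncard)]
  apply Finset.sum_congr rfl
  intro S hSmem
  rw [Finset.mem_filter] at hSmem
  have hS : IsSubtreeSet T (↑S : Set (Sym2 V)) := hSmem.2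
  set L := S.filter (fun e => e ∈ leafEdges (↑S : Set (Sym2 V))) with hL
  have hLcoe : (↑L : Set (Sym2 V)) = leafEdges (↑S : Set (Sym2 V)) := by
    ext e
    simp only [hL, Finset.coe_filter, Set.mem_setOf_eq, Finset.mem_coe]
    exact ⟨fun h => h.2, fun h => ⟨by exact_mod_cast h.1, h⟩⟩
  have hLS : L ⊆ S := Finset.filter_subset _ _
  have hLne : L.Nonempty := by
    obtain ⟨f, hf⟩ := leafEdges_nonempty' hT hS
    exact ⟨f, by rw [← Finset.mem_coe, hLcoe]; exact hf⟩
  have hncard : (leafEdges (↑S : Set (Sym2 V))).ncard = L.card := by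
    rw [← hLcoe, Set.ncard_coe_finset]
  -- identify the fiber
  have hfiber : ((Finset.univ : Finset (Sym2 V)).powerset.filter
      (fun A : Finset (Sym2 V) => A.Nonempty ∧ (↑A : Set (Sym2 V)) ⊆ T.edgeSet)).filter
      (fun A => clF hT A = S) =
      (Finset.univ : Finset (Sym2 V)).powerset.filter (fun A => L ⊆ A ∧ A ⊆ S) := by
    ext A
    simp only [Finset.mem_filter, Finset.mem_powerset, Finset.subset_univ, true_and]
    constructor
    · rintro ⟨⟨hAne, hAE⟩, hclF⟩
      obtain ⟨h1, h2⟩ := (clF_eq_iff hT hS hAne hAE).mp hclF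
      refine ⟨?_, h2⟩
      intro e he
      have : e ∈ leafEdges (↑S : Set (Sym2 V)) := by rw [← hLcoe]; exact_mod_cast he
      exact_mod_cast h1 this
    · rintro ⟨hLA, hAS⟩
      have hAne : A.Nonempty := hLne.mono hLA
      have hAE : (↑A : Set (Sym2 V)) ⊆ T.edgeSet := fun e he =>
        hS.2.1 (by exact_mod_cast hAS (by exact_mod_cast he))
      refine ⟨⟨hAne, hAE⟩, ?_⟩
      rw [clF_eq_iff hT hS hAne hAE]
      refine ⟨?_, hAS⟩
      rw [← hLcoe]
      exact_mod_cast hLA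
  rw [hfiber, hncard]
  have hsummand : ∀ A ∈ (Finset.univ : Finset (Sym2 V)).powerset.filter
      (fun A => L ⊆ A ∧ A ⊆ S),
      (q * r) ^ A.card * (q * (1 - r)) ^ (connector T (↑A : Set (Sym2 V))).ncard =
      (q * r) ^ A.card * (q * (1 - r)) ^ (S.card - A.card) := by
    intro A hA
    rw [Finset.mem_filter] at hA
    obtain ⟨_, hLA, hAS⟩ := hA
    have hAne : A.Nonempty := hLne.mono hLA
    have hAE : (↑A : Set (Sym2 V)) ⊆ T.edgeSet := fun e he =>
      hS.2.1 (by exact_mod_cast hAS (by exact_mod_cast he))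
    have hclF : clF hT A = S := by
      rw [clF_eq_iff hT hS hAne hAE]
      exact ⟨by rw [← hLcoe]; exact_mod_cast hLA, hAS⟩
    have : connector T (↑A : Set (Sym2 V)) = ↑(S \ A) := by
      rw [connector_eq (hT := hT) hAne hAE, hclF, Finset.coe_sdiff]
    rw [this, Set.ncard_coe_finset, Finset.card_sdiff_of_subset hAS]
  rw [Finset.sum_congr rfl hsummand]
  -- now the pure counting identity
  have key : ∀ s : Finset (Sym2 V),
      ∑ B ∈ s.powerset, (q * r) ^ B.card * (q * (1 - r)) ^ (s \ B).card = q ^ s.card := by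
    intro s
    calc ∑ B ∈ s.powerset, (q * r) ^ B.card * (q * (1 - r)) ^ (s \ B).card
        = ∑ B ∈ s.powerset, (∏ _i ∈ B, (q * r)) * (∏ _i ∈ s \ B, (q * (1 - r))) := by
          refine Finset.sum_congr rfl fun B _ => ?_
          rw [Finset.prod_const, Finset.prod_const]
      _ = ∏ _i ∈ s, (q * r + q * (1 - r)) := (Finset.prod_add _ _ s).symm
      _ = q ^ s.card := by
          rw [Finset.prod_const]
          congr 1
          ring
  -- reindex the fiber sum by B = A \ L
  have hreindex : ∑ A ∈ (Finset.univ : Finset (Sym2 V)).powerset.filter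
      (fun A => L ⊆ A ∧ A ⊆ S), (q * r) ^ A.card * (q * (1 - r)) ^ (S.card - A.card) =
      ∑ B ∈ (S \ L).powerset,
        (q * r) ^ (L.card + B.card) * (q * (1 - r)) ^ ((S \ L) \ B).card := by
    refine Finset.sum_nbij' (fun A => A \ L) (fun B => L ∪ B) ?_ ?_ ?_ ?_ ?_
    · intro A hA
      rw [Finset.mem_filter] at hA
      exact Finset.mem_powerset.mpr (Finset.sdiff_subset_sdiff hA.2.2 (Finset.Subset.refl L))
    · intro B hB
      rw [Finset.mem_powerset] at hB
      rw [Finset.mem_filter]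
      exact ⟨Finset.mem_powerset.mpr (Finset.subset_univ _), Finset.subset_union_left,
        Finset.union_subset hLS (hB.trans (Finset.sdiff_subset))⟩
    · intro A hA
      rw [Finset.mem_filter] at hA
      exact Finset.union_sdiff_of_subset hA.2.1
    · intro B hB
      rw [Finset.mem_powerset] at hB
      exact Finset.union_sdiff_cancel_left
        (Finset.disjoint_sdiff.mono_right hB)
    · intro A hA
      rw [Finset.mem_filter] at hA
      obtain ⟨_, hLA, hAS⟩ := hA
      have hdisj : Disjoint L (A \ L) := Finset.disjoint_sdiff
      have h1 : L.card + (A \ L).card = A.card := by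
        rw [← Finset.card_union_of_disjoint hdisj, Finset.union_sdiff_of_subset hLA]
      have h2 : ((S \ L) \ (A \ L)).card = S.card - A.card := by
        have hsub : A \ L ⊆ S \ L := Finset.sdiff_subset_sdiff hAS (Finset.Subset.refl L)
        rw [Finset.card_sdiff_of_subset hsub, Finset.card_sdiff_of_subset hLS]
        have hc1 : L.card ≤ A.card := Finset.card_le_card hLA
        have hc2 : A.card ≤ S.card := Finset.card_le_card hAS
        have hc3 : (A \ L).card = A.card - L.card := by rw [Finset.card_sdiff_of_subset hLA]
        omega
      rw [h1, h2]
  rw [hreindex]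
  -- final algebra
  have hsplit : ∑ B ∈ (S \ L).powerset,
      (q * r) ^ (L.card + B.card) * (q * (1 - r)) ^ ((S \ L) \ B).card =
      (q * r) ^ L.card * ∑ B ∈ (S \ L).powerset,
        (q * r) ^ B.card * (q * (1 - r)) ^ ((S \ L) \ B).card := by
    rw [Finset.mul_sum]
    refine Finset.sum_congr rfl fun B _ => ?_
    rw [pow_add]
    ring
  rw [hsplit, key]
  have hcards : L.card + (S \ L).card = S.card := by
    rw [Finset.card_sdiff_of_subset hLS]
    have := Finset.card_le_card hLS
    omega
  rw [← hcards, pow_add, mul_pow]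
  ring
end
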